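/- arXiv:1805.06315 — 2 statements merged into one kernel-verified Lean document; each statement's English description precedes it below -/
import Mathlib

section
/- In any feasible update sequence, for every block b of flow pair c, all vertices of F_c^u ∩ b other than start(b) are updated strictly before start(b) is updated, and all vertices of b not on F_c^u are updated strictly after start(b) is updated. -/
/-!
A formal model of congestion-free flow rerouting (network update scheduling).
An update flow network consists of a source `s`, a terminal `t`, edge
capacities, and `k` update flow pairs, each given by an old `s`-`t` path and
an update (new) `s`-`t` path (represented as lists of vertices) with a demand.
An update sequence assigns to every update `(v, i)` (vertex `v`, pair `i`) a
round; it is feasible if resolving all updates of earlier rounds together with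
any subset of the current round always leaves, for every pair, a unique valid
(capacity-respecting) transient `s`-`t` path among the active edges, and the
family of transient paths jointly respects the capacities.
-/

namespace FlowUpdate

variable {V : Type} [DecidableEq V] {k : ℕ}

/-- The edges of a path given as a list of vertices. -/
def edgesOf (p : List V) : List (V × V) := p.zip p.tail

/-- The subpath of `p` from vertex `a` to vertex `z` (inclusive). -/
def segment (p : List V) (a z : V) : List V :=
  ((p.dropWhile (fun v => decide (v ≠ a))).takeWhile (fun v => decide (v ≠ z))) ++ [z]

/-- The outgoing edge of `v` on the path `p`, if any. -/
def outEdge (p : List V) (v : V) : Option (V × V) :=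
  (edgesOf p).find? (fun e => decide (e.1 = v))

/-- An update flow network with `k` update flow pairs. -/
structure UFN (V : Type) (k : ℕ) where
  s : V
  t : V
  cap : V → V → ℕ
  old : Fin k → List V
  new : Fin k → List V
  demand : Fin k → ℕ

namespace UFN

/-- After resolving the set of updates `U`, edge `e` is active for pair `i` iff
it is an old edge whose tail is not yet updated, or a new edge whose tail is
updated. -/
def active (G : UFN V k) (U : Set (V × Fin k)) (i : Fin k) (e : V × V) : Prop :=
  (e ∈ edgesOf (G.old i) ∧ (e.1, i) ∉ U) ∨ (e ∈ edgesOf (G.new i) ∧ (e.1, i) ∈ U)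

/-- `p` is a simple `s`-`t` path all of whose edges satisfy `E`. -/
def IsPathIn (E : V × V → Prop) (s t : V) (p : List V) : Prop :=
  p.head? = some s ∧ p.getLast? = some t ∧ List.Chain' (fun u v => E (u, v)) p ∧ p.Nodup

/-- `p` respects the capacities for the demand of pair `i`. -/
def ValidPath (G : UFN V k) (i : Fin k) (p : List V) : Prop :=
  ∀ e ∈ edgesOf p, G.demand i ≤ G.cap e.1 e.2

/-- `T` is the unique valid transient path of pair `i` after resolving `U`. -/
def TransientPair (G : UFN V k) (U : Set (V × Fin k)) (i : Fin k) (T : List V) : Prop :=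
  IsPathIn (G.active U i) G.s G.t T ∧ G.ValidPath i T ∧
    ∀ p, IsPathIn (G.active U i) G.s G.t p → G.ValidPath i p → p = T

/-- After resolving `U`, every pair has a unique valid transient path, and the
family of transient paths jointly respects the capacities. -/
def TransientFamily (G : UFN V k) (U : Set (V × Fin k)) : Prop :=
  ∃ T : Fin k → List V,
    (∀ i, G.TransientPair U i (T i)) ∧
    (∀ u v : V, (∑ i : Fin k, if (u, v) ∈ edgesOf (T i) then G.demand i else 0) ≤ G.cap u v)

/-- An update sequence (an assignment of rounds to all updates) is feasible if
after resolving all updates of rounds `< r` together with any subset of the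
updates of round `r`, all pairs admit a transient family. -/
def Feasible (G : UFN V k) (R : V × Fin k → ℕ) : Prop :=
  ∀ r : ℕ, ∀ S : Set (V × Fin k), (∀ u ∈ S, R u = r) →
    G.TransientFamily ({u | R u < r} ∪ S)

/-- `p` is a simple path from the source to the terminal. -/
def IsStPath (G : UFN V k) (p : List V) : Prop :=
  p.head? = some G.s ∧ p.getLast? = some G.t ∧ p.Nodup

/-- Well-formedness of an update flow network: all old and new flows are simple
`s`-`t` paths, each pair forms a DAG, each new path respects capacities for its
own demand, and both the old family and the new family jointly respect the
capacities. -/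
def WellFormed (G : UFN V k) : Prop :=
  (∀ i, G.IsStPath (G.old i) ∧ G.IsStPath (G.new i)) ∧
  (∀ i, ∃ ord : V → ℕ, ∀ e ∈ edgesOf (G.old i) ++ edgesOf (G.new i), ord e.1 < ord e.2) ∧
  (∀ i, G.ValidPath i (G.new i)) ∧
  (∀ u v : V, (∑ i : Fin k, if (u, v) ∈ edgesOf (G.old i) then G.demand i else 0) ≤ G.cap u v) ∧
  (∀ u v : V, (∑ i : Fin k, if (u, v) ∈ edgesOf (G.new i) then G.demand i else 0) ≤ G.cap u v)

/-- The common vertices of the old and new path of pair `i`, in path order. -/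
def commons (G : UFN V k) (i : Fin k) : List V :=
  (G.old i).filter (fun v => decide (v ∈ G.new i))

/-- A block of pair `i` is a pair `(a, z)` of consecutive common vertices of the
old and new paths of `i`. -/
def IsBlock (G : UFN V k) (i : Fin k) (b : V × V) : Prop :=
  b ∈ edgesOf (G.commons i)

/-- A (candidate) block: a pair index together with its start and end vertices. -/
abbrev Blk (V : Type) (k : ℕ) := Fin k × V × V

def IsBlk (G : UFN V k) (b : Blk V k) : Prop := G.IsBlock b.1 b.2

/-- The old-path segment of a block. -/
def blkOldSeg (G : UFN V k) (b : Blk V k) : List V := segment (G.old b.1) b.2.1 b.2.2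

/-- The update-path segment of a block. -/
def blkNewSeg (G : UFN V k) (b : Blk V k) : List V := segment (G.new b.1) b.2.1 b.2.2

/-- Block `b1` depends on block `b2` (written `b1 → b2`) if they belong to
different pairs and some edge lies on `b1`'s update path and on `b2`'s old path
with capacity less than the sum of the two demands. -/
def Dep (G : UFN V k) (b1 b2 : Blk V k) : Prop :=
  G.IsBlk b1 ∧ G.IsBlk b2 ∧ b1.1 ≠ b2.1 ∧
  ∃ e : V × V, e ∈ edgesOf (G.blkNewSeg b1) ∧ e ∈ edgesOf (G.blkOldSeg b2) ∧
    G.cap e.1 e.2 < G.demand b1.1 + G.demand b2.1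

/-- The dependency graph contains a directed cycle. -/
def HasDepCycle (G : UFN V k) : Prop := ∃ b : Blk V k, Relation.TransGen G.Dep b b

/-- The number of rounds used by an update sequence. -/
def numRounds [Fintype V] (R : V × Fin k → ℕ) : ℕ :=
  (Finset.image R Finset.univ).card

/-- An update `(v, i)` is empty if `v`'s outgoing old edge and outgoing new edge
for pair `i` coincide (in particular if `v` has no outgoing edge for pair `i`). -/
def EmptyUpd (G : UFN V k) (u : V × Fin k) : Prop :=
  outEdge (G.old u.2) u.1 = outEdge (G.new u.2) u.1

instance (G : UFN V k) (u : V × Fin k) : Decidable (G.EmptyUpd u) :=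
  inferInstanceAs (Decidable (outEdge (G.old u.2) u.1 = outEdge (G.new u.2) u.1))

/-- `R` updates every block in (at most) 3 consecutive rounds: first all internal
update-path vertices of the block, then the start vertex, then all old-path-only
vertices of the block. -/
def BlockPattern (G : UFN V k) (R : V × Fin k → ℕ) : Prop :=
  ∀ b : Blk V k, G.IsBlk b → ∃ r : ℕ,
    (∀ v ∈ G.blkNewSeg b, v ≠ b.2.1 → v ≠ b.2.2 → R (v, b.1) = r) ∧
    R (b.2.1, b.1) = r + 1 ∧
    (∀ v ∈ G.blkOldSeg b, v ∉ G.new b.1 → R (v, b.1) = r + 2)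

/-- The size of the network (total length of the flow paths). -/
def size (G : UFN V k) : ℕ := ∑ i : Fin k, ((G.old i).length + (G.new i).length)

end UFN

end FlowUpdate

namespace FlowUpdate

section Helpers

variable {V : Type} [DecidableEq V] {k : ℕ}

lemma edgesOf_cons₂ (x y : V) (l : List V) :
    edgesOf (x :: y :: l) = (x, y) :: edgesOf (y :: l) := rfl

lemma mem_edgesOf : ∀ {p : List V} {x y : V}, (x, y) ∈ edgesOf p →
    ∃ A B, p = A ++ x :: y :: B
  | [], _, _, h => by simp [edgesOf] at h
  | [_], _, _, h => by simp [edgesOf] at h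
  | u :: v :: tl, x, y, h => by
    rw [edgesOf_cons₂, List.mem_cons] at h
    rcases h with h | h
    · injection h with h1 h2
      subst h1; subst h2
      exact ⟨[], tl, rfl⟩
    · obtain ⟨A, B, hAB⟩ := mem_edgesOf h
      exact ⟨u :: A, B, by rw [List.cons_append, ← hAB]⟩

lemma mem_of_edge {p : List V} {x y : V} (h : (x, y) ∈ edgesOf p) : x ∈ p ∧ y ∈ p := by
  obtain ⟨A, B, rfl⟩ := mem_edgesOf h
  constructor <;> simp

lemma chain'_edgesOf : ∀ (p : List V), List.Chain' (fun x y => (x, y) ∈ edgesOf p) p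
  | [] => List.isChain_nil
  | [_] => List.isChain_singleton _
  | u :: v :: tl => by
    rw [List.Chain', List.isChain_cons_cons]
    refine ⟨by rw [edgesOf_cons₂]; exact List.mem_cons_self, ?_⟩
    exact (chain'_edgesOf (v :: tl)).imp fun a b hab => by
      rw [edgesOf_cons₂]; exact List.mem_cons_of_mem _ hab

lemma rel_of_chain' {r : V → V → Prop} {p : List V} (hc : List.Chain' r p)
    {x y : V} (h : (x, y) ∈ edgesOf p) : r x y := by
  obtain ⟨A, B, rfl⟩ := mem_edgesOf h
  have h2 := (List.isChain_append.mp hc).2.1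
  exact (List.isChain_cons_cons.mp h2).1

lemma nodup_mid_unique {x : V} : ∀ {A p A' B B' : List V}, p.Nodup →
    p = A ++ x :: B → p = A' ++ x :: B' → B = B' := by
  intro A
  induction A with
  | nil =>
    intro p A' B B' hnd h1 h2
    subst h1
    cases A' with
    | nil => injection h2 with _ h
    | cons c A'' =>
      injection h2 with h2a h2b
      exfalso
      exact (List.nodup_cons.mp hnd).1 (by rw [h2b]; simp)
  | cons a A2 ih =>
    intro p A' B B' hnd h1 h2
    subst h1
    cases A' with
    | nil =>
      injection h2 with h2a h2b
      exfalso
      have : a ∈ A2 ++ x :: B := by rw [h2a]; simp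
      exact (List.nodup_cons.mp hnd).1 this
    | cons c A'2 =>
      injection h2 with h2a h2b
      exact ih (List.nodup_cons.mp hnd).2 rfl h2b

lemma nodup_succ_unique {p : List V} (hnd : p.Nodup) {x y y' : V}
    (h1 : (x, y) ∈ edgesOf p) (h2 : (x, y') ∈ edgesOf p) : y = y' := by
  obtain ⟨A, B, hAB⟩ := mem_edgesOf h1
  obtain ⟨A', B', hAB'⟩ := mem_edgesOf h2
  have h3 := nodup_mid_unique (x := x) (B := y :: B) (B' := y' :: B') hnd hAB hAB'
  injection h3 with h _

lemma exists_succ_of_mem : ∀ {l : List V} {x y : V}, x ∈ l → l.getLast? = some y → x ≠ y →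
    ∃ v, (x, v) ∈ edgesOf l
  | [], x, _, hx, _, _ => absurd hx List.not_mem_nil
  | [u], x, y, hx, hl, hne => by
    rw [List.getLast?_singleton] at hl
    injection hl with hl
    rw [List.mem_singleton] at hx
    exact absurd (hx.trans hl) hne
  | u :: v :: tl, x, y, hx, hl, hne => by
    rcases List.mem_cons.mp hx with rfl | hx'
    · exact ⟨v, by rw [edgesOf_cons₂]; exact List.mem_cons_self⟩
    · obtain ⟨w, hw⟩ := exists_succ_of_mem hx'
        (by rwa [List.getLast?_cons_cons] at hl) hne
      exact ⟨w, by rw [edgesOf_cons₂]; exact List.mem_cons_of_mem _ hw⟩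

lemma exists_crossing {f : V → ℕ} {c : ℕ} : ∀ {l : List V} {x y : V},
    l.head? = some x → l.getLast? = some y → f x ≤ c → c < f y →
    ∃ u v, (u, v) ∈ edgesOf l ∧ f u ≤ c ∧ c < f v
  | [], _, _, hh, _, _, _ => by simp at hh
  | [u], x, y, hh, hl, hx, hy => by
    rw [List.head?_cons] at hh
    rw [List.getLast?_singleton] at hl
    injection hh with hh; injection hl with hl
    subst hh; subst hl
    exact absurd hy (not_lt.mpr hx)
  | u :: v :: tl, x, y, hh, hl, hx, hy => by
    rw [List.head?_cons] at hh
    injection hh with hh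
    subst hh
    by_cases hv : f v ≤ c
    · obtain ⟨u', v', h1, h2, h3⟩ := exists_crossing (l := v :: tl) rfl
        (by rwa [List.getLast?_cons_cons] at hl) hv hy
      exact ⟨u', v', by rw [edgesOf_cons₂]; exact List.mem_cons_of_mem _ h1, h2, h3⟩
    · exact ⟨u, v, by rw [edgesOf_cons₂]; exact List.mem_cons_self, hx, lt_of_not_ge hv⟩

lemma pairwise_split {f : V → ℕ} {p A B : List V} (h : p.Pairwise fun u v => f u < f v)
    (hd : p = A ++ B) {x y : V} (hx : x ∈ A) (hy : y ∈ B) : f x < f y := by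
  subst hd
  exact (List.pairwise_append.mp h).2.2 x hx y hy

lemma lt_getLast {f : V → ℕ} {p : List V} {tt x : V}
    (h : p.Pairwise fun u v => f u < f v)
    (hl : p.getLast? = some tt) (hx : x ∈ p) (hne : x ≠ tt) : f x < f tt := by
  obtain ⟨A, B, rfl⟩ := List.append_of_mem hx
  cases B with
  | nil =>
    rw [List.getLast?_append] at hl
    rw [List.getLast?_singleton] at hl
    simp [Option.or] at hl
    exact absurd hl hne
  | cons b B' =>
    rw [List.getLast?_append, List.getLast?_cons_cons] at hl
    obtain ⟨w, hw⟩ := Option.isSome_iff_exists.mp (List.getLast?_isSome.mpr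
      (by simp : (b :: B') ≠ []))
    rw [hw] at hl
    simp [Option.or] at hl
    have htt : tt ∈ b :: B' := List.mem_of_mem_getLast? (Option.mem_def.mpr (by rw [hw, hl]))
    exact pairwise_split h (show A ++ x :: b :: B' = (A ++ [x]) ++ (b :: B') by simp)
      (by simp) htt

lemma head_lt {f : V → ℕ} {p : List V} {ss x : V}
    (h : p.Pairwise fun u v => f u < f v)
    (hh : p.head? = some ss) (hx : x ∈ p) (hne : x ≠ ss) : f ss < f x := by
  cases p with
  | nil => simp at hh
  | cons u tl =>
    rw [List.head?_cons] at hh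
    injection hh with hh
    subst hh
    rcases List.mem_cons.mp hx with rfl | hx'
    · exact absurd rfl hne
    · exact (List.pairwise_cons.mp h).1 x hx'

lemma filter_eq_cons' {q : V → Bool} : ∀ {l cs : List V} {x : V}, l.filter q = x :: cs →
    ∃ A B, l = A ++ x :: B ∧ (∀ u ∈ A, q u = false) ∧ B.filter q = cs := by
  intro l
  induction l with
  | nil => intro cs x h; simp at h
  | cons u tl ih =>
    intro cs x h
    by_cases hq : q u = true
    · rw [List.filter_cons, if_pos hq] at h
      injection h with h1 h2
      subst h1
      exact ⟨[], tl, rfl, by simp, h2⟩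
    · rw [List.filter_cons, if_neg hq] at h
      obtain ⟨A, B, hAB, hA, hB⟩ := ih h
      refine ⟨u :: A, B, by rw [hAB, List.cons_append], ?_, hB⟩
      intro w hw
      rcases List.mem_cons.mp hw with rfl | hw'
      · exact Bool.eq_false_iff.mpr hq
      · exact hA w hw'

lemma filter_suffix {q : V → Bool} : ∀ {l c1 rest : List V}, l.filter q = c1 ++ rest →
    ∃ B, B <:+ l ∧ B.filter q = rest := by
  intro l
  induction l with
  | nil =>
    intro c1 rest h
    refine ⟨[], List.suffix_refl _, ?_⟩
    have : c1 ++ rest = [] := by simpa using h.symm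
    rw [(List.append_eq_nil_iff.mp this).2]
    rfl
  | cons u tl ih =>
    intro c1 rest h
    by_cases hq : q u = true
    · rw [List.filter_cons, if_pos hq] at h
      cases c1 with
      | nil =>
        refine ⟨u :: tl, List.suffix_refl _, ?_⟩
        rw [List.filter_cons, if_pos hq]
        simpa using h
      | cons c c1' =>
        injection h with h1 h2
        obtain ⟨B, hB, hBf⟩ := ih h2
        exact ⟨B, hB.trans (List.suffix_cons u tl), hBf⟩
    · rw [List.filter_cons, if_neg hq] at h
      obtain ⟨B, hB, hBf⟩ := ih h
      exact ⟨B, hB.trans (List.suffix_cons u tl), hBf⟩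

lemma dropWhile_ne : ∀ (A B : List V) (a : V), (∀ x ∈ A, x ≠ a) →
    (A ++ a :: B).dropWhile (fun v => decide (v ≠ a)) = a :: B
  | [], B, a, _ => by simp
  | u :: A', B, a, h => by
    rw [List.cons_append, List.dropWhile_cons_of_pos (by simp [h u (by simp)])]
    exact dropWhile_ne A' B a fun x hx => h x (by simp [hx])

lemma takeWhile_ne : ∀ (A B : List V) (z : V), (∀ x ∈ A, x ≠ z) →
    (A ++ z :: B).takeWhile (fun v => decide (v ≠ z)) = A
  | [], B, z, _ => by simp
  | u :: A', B, z, h => by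
    rw [List.cons_append, List.takeWhile_cons_of_pos (by simp [h u (by simp)])]
    rw [takeWhile_ne A' B z fun x hx => h x (by simp [hx])]

lemma segment_eq {p P1 Q R2 : List V} {a z : V} (hnd : p.Nodup)
    (hp : p = P1 ++ a :: (Q ++ z :: R2)) : segment p a z = a :: (Q ++ [z]) := by
  subst hp
  obtain ⟨hnd1, hnd2, hdisj⟩ := List.nodup_append'.mp hnd
  have hP1a : ∀ x ∈ P1, x ≠ a := fun x hx h => hdisj hx (by rw [h]; exact List.mem_cons_self)
  obtain ⟨hanotin, hnd3⟩ := List.nodup_cons.mp hnd2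
  have haz : a ≠ z := fun h => hanotin (by rw [h]; simp)
  obtain ⟨-, -, hdisj2⟩ := List.nodup_append'.mp hnd3
  have hQz : ∀ x ∈ a :: Q, x ≠ z := by
    intro x hx
    rcases List.mem_cons.mp hx with rfl | hx'
    · exact haz
    · exact fun h => hdisj2 hx' (by rw [h]; exact List.mem_cons_self)
  unfold segment
  rw [dropWhile_ne P1 (Q ++ z :: R2) a hP1a]
  rw [show a :: (Q ++ z :: R2) = (a :: Q) ++ z :: R2 from by simp]
  rw [takeWhile_ne (a :: Q) R2 z hQz]
  simp

lemma no_cross {f : V → ℕ} {p : List V} (hP : p.Pairwise fun u v => f u < f v)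
    {u v c : V} (he : (u, v) ∈ edgesOf p) (hc : c ∈ p)
    (hu : f u ≤ f c) (hv : f c < f v) : c = u ∨ c = v := by
  obtain ⟨A, B, rfl⟩ := mem_edgesOf he
  rcases List.mem_append.mp hc with hA | hB
  · exact absurd (pairwise_split hP rfl hA (show u ∈ u :: v :: B by simp)) (not_lt.mpr hu)
  · rcases List.mem_cons.mp hB with rfl | hB'
    · exact Or.inl rfl
    rcases List.mem_cons.mp hB' with rfl | hB''
    · exact Or.inr rfl
    · exact absurd hv (asymm (pairwise_split hP
        (show A ++ u :: v :: B = (A ++ [u, v]) ++ B by simp) (show v ∈ A ++ [u, v] by simp) hB''))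

open UFN in
lemma common_mem {G : UFN V k} {i : Fin k} {ordp : V → ℕ}
    (hPold : (G.old i).Pairwise fun u v => ordp u < ordp v)
    (hPnew : (G.new i).Pairwise fun u v => ordp u < ordp v)
    (hOs : (G.old i).head? = some G.s) (hOt : (G.old i).getLast? = some G.t)
    {U : Set (V × Fin k)} {T : List V}
    (hT : UFN.IsPathIn (G.active U i) G.s G.t T)
    {c : V} (hc1 : c ∈ G.old i) (hc2 : c ∈ G.new i) : c ∈ T := by
  obtain ⟨hh, hl, hch, hnd⟩ := hT
  by_contra hcT
  have hsT : G.s ∈ T := List.mem_of_mem_head? (Option.mem_def.mpr hh)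
  have htT : G.t ∈ T := List.mem_of_mem_getLast? (Option.mem_def.mpr hl)
  have hcs : c ≠ G.s := fun h => hcT (h ▸ hsT)
  have hct : c ≠ G.t := fun h => hcT (h ▸ htT)
  have h1 : ordp G.s < ordp c := head_lt hPold hOs hc1 hcs
  have h2 : ordp c < ordp G.t := lt_getLast hPold hOt hc1 hct
  obtain ⟨u, v, he, hu, hv⟩ := exists_crossing hh hl (le_of_lt h1) h2
  have huT := (mem_of_edge he).1
  have hvT := (mem_of_edge he).2
  rcases rel_of_chain' hch he with ⟨hmem, -⟩ | ⟨hmem, -⟩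
  · rcases no_cross hPold hmem hc1 hu hv with rfl | rfl
    · exact hcT huT
    · exact hcT hvT
  · rcases no_cross hPnew hmem hc2 hu hv with rfl | rfl
    · exact hcT huT
    · exact hcT hvT

lemma walk_new {G : UFN V k} {i : Fin k} {U : Set (V × Fin k)} {T : List V}
    (hT : UFN.IsPathIn (G.active U i) G.s G.t T)
    (hNnd : (G.new i).Nodup) (htold : G.t ∈ G.old i) :
    ∀ (rest : List V) (u : V), u ∈ T → (u, i) ∈ U → u ≠ G.t →
      List.Chain' (fun x y => (x, y) ∈ edgesOf (G.new i)) (u :: rest) →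
      (∀ x ∈ rest, x ∉ G.old i) → ∀ x ∈ rest, (x, i) ∈ U ∧ x ∈ T := by
  obtain ⟨hh, hl, hch, hnd⟩ := hT
  intro rest
  induction rest with
  | nil => intro u _ _ _ _ _ x hx; exact absurd hx List.not_mem_nil
  | cons x rest' ih =>
    intro u huT huU hut hchain hnotold
    have hux : (u, x) ∈ edgesOf (G.new i) := (List.isChain_cons_cons.mp hchain).1
    obtain ⟨v, hv⟩ := exists_succ_of_mem huT hl hut
    rcases rel_of_chain' hch hv with ⟨-, hnU⟩ | ⟨hmemN, -⟩
    · exact absurd huU hnU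
    have hvx : x = v := (nodup_succ_unique hNnd hmemN hux).symm
    subst hvx
    have hxT : x ∈ T := (mem_of_edge hv).2
    have hxold : x ∉ G.old i := hnotold x (List.mem_cons_self)
    have hxt : x ≠ G.t := fun h => hxold (h ▸ htold)
    have hxU : (x, i) ∈ U := by
      obtain ⟨w, hw⟩ := exists_succ_of_mem hxT hl hxt
      rcases rel_of_chain' hch hw with ⟨hmemO, -⟩ | ⟨-, hU⟩
      · exact absurd (mem_of_edge hmemO).1 hxold
      · exact hU
    intro y hy
    rcases List.mem_cons.mp hy with rfl | hy'
    · exact ⟨hxU, hxT⟩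
    · exact ih x hxT hxU hxt (List.isChain_cons_cons.mp hchain).2
        (fun w hw => hnotold w (List.mem_cons_of_mem _ hw)) y hy'

lemma walk_old {G : UFN V k} {i : Fin k} {U : Set (V × Fin k)} {T : List V}
    (hT : UFN.IsPathIn (G.active U i) G.s G.t T)
    (hOnd : (G.old i).Nodup) (htnew : G.t ∈ G.new i) :
    ∀ (rest : List V) (u : V), u ∈ T → (u, i) ∉ U → u ≠ G.t →
      List.Chain' (fun x y => (x, y) ∈ edgesOf (G.old i)) (u :: rest) →
      (∀ x ∈ rest, x ∉ G.new i) → ∀ x ∈ rest, (x, i) ∉ U ∧ x ∈ T := by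
  obtain ⟨hh, hl, hch, hnd⟩ := hT
  intro rest
  induction rest with
  | nil => intro u _ _ _ _ _ x hx; exact absurd hx List.not_mem_nil
  | cons x rest' ih =>
    intro u huT huU hut hchain hnotnew
    have hux : (u, x) ∈ edgesOf (G.old i) := (List.isChain_cons_cons.mp hchain).1
    obtain ⟨v, hv⟩ := exists_succ_of_mem huT hl hut
    rcases rel_of_chain' hch hv with ⟨hmemO, -⟩ | ⟨-, hU⟩
    swap
    · exact absurd hU huU
    have hvx : x = v := (nodup_succ_unique hOnd hmemO hux).symm
    subst hvx
    have hxT : x ∈ T := (mem_of_edge hv).2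
    have hxnew : x ∉ G.new i := hnotnew x (List.mem_cons_self)
    have hxt : x ≠ G.t := fun h => hxnew (h ▸ htnew)
    have hxU : (x, i) ∉ U := by
      intro hU
      obtain ⟨w, hw⟩ := exists_succ_of_mem hxT hl hxt
      rcases rel_of_chain' hch hw with ⟨-, hnU⟩ | ⟨hmemN, -⟩
      · exact hnU hU
      · exact hxnew (mem_of_edge hmemN).1
    intro y hy
    rcases List.mem_cons.mp hy with rfl | hy'
    · exact ⟨hxU, hxT⟩
    · exact ih x hxT hxU hxt (List.isChain_cons_cons.mp hchain).2
        (fun w hw => hnotnew w (List.mem_cons_of_mem _ hw)) y hy'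

end Helpers

end FlowUpdate

open FlowUpdate in
/-- In any feasible update sequence, for every block `b` of a flow
pair, all vertices of the update path of the block other than its start are
updated strictly before the start, and all vertices of the block not on the
update flow are updated strictly after the start. -/
theorem stmt1 {V : Type} [DecidableEq V] {k : ℕ} (G : UFN V k)
    (hWF : G.WellFormed) (R : V × Fin k → ℕ) (hR : G.Feasible R)
    (b : UFN.Blk V k) (hb : G.IsBlk b) :
    (∀ v ∈ G.blkNewSeg b, v ≠ b.2.1 → v ≠ b.2.2 → R (v, b.1) < R (b.2.1, b.1)) ∧
    (∀ v ∈ G.blkOldSeg b, v ∉ G.new b.1 → R (b.2.1, b.1) < R (v, b.1)) := by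
  obtain ⟨i, a, z⟩ := b
  obtain ⟨hst, hordEx, -, -, -⟩ := hWF
  obtain ⟨ordp, hord⟩ := hordEx i
  obtain ⟨hOs, hOt, hOnd⟩ := (hst i).1
  obtain ⟨hNs, hNt, hNnd⟩ := (hst i).2
  haveI : IsTrans V fun u v => ordp u < ordp v := ⟨fun _ _ _ => lt_trans⟩
  have hPold : (G.old i).Pairwise fun u v => ordp u < ordp v :=
    List.isChain_iff_pairwise.mp ((chain'_edgesOf (G.old i)).imp fun u v h =>
      hord (u, v) (List.mem_append_left _ h))
  have hPnew : (G.new i).Pairwise fun u v => ordp u < ordp v :=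
    List.isChain_iff_pairwise.mp ((chain'_edgesOf (G.new i)).imp fun u v h =>
      hord (u, v) (List.mem_append_right _ h))
  have hb' : (a, z) ∈ edgesOf (UFN.commons G i) := hb
  obtain ⟨C1, C2, hC⟩ := mem_edgesOf hb'
  have hfil : (G.old i).filter (fun v => decide (v ∈ G.new i)) = C1 ++ a :: z :: C2 := hC
  obtain ⟨B0, hB0suf, hB0⟩ := filter_suffix hfil
  obtain ⟨A2, B2, hB0eq, -, hB2f⟩ := filter_eq_cons' hB0
  obtain ⟨M, B3, hB2eq, hMq, -⟩ := filter_eq_cons' hB2f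
  obtain ⟨pre, hpre⟩ := hB0suf
  have hOld : G.old i = (pre ++ A2) ++ a :: (M ++ z :: B3) := by
    rw [← hpre, hB0eq, hB2eq]; simp
  have hMnew : ∀ u ∈ M, u ∉ G.new i := by
    intro u hu hmem
    have := hMq u hu
    simp [hmem] at this
  have haC : a ∈ (G.old i).filter (fun v => decide (v ∈ G.new i)) := by rw [hfil]; simp
  have hzC : z ∈ (G.old i).filter (fun v => decide (v ∈ G.new i)) := by rw [hfil]; simp
  have haN : a ∈ G.new i := by simpa using (List.mem_filter.mp haC).2
  have hzN : z ∈ G.new i := by simpa using (List.mem_filter.mp hzC).2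
  have haO : a ∈ G.old i := (List.mem_filter.mp haC).1
  have hzO : z ∈ G.old i := (List.mem_filter.mp hzC).1
  have haz : ordp a < ordp z := pairwise_split hPold
    (show G.old i = (pre ++ A2 ++ [a]) ++ (M ++ z :: B3) by rw [hOld]; simp)
    (by simp) (by simp)
  obtain ⟨N1, N2, hN1⟩ := List.append_of_mem haN
  have hzN2 : z ∈ N2 := by
    have hz' := hzN
    rw [hN1] at hz'
    rcases List.mem_append.mp hz' with h | h
    · exact absurd (pairwise_split hPnew hN1 h (List.mem_cons_self)) (asymm haz)
    · rcases List.mem_cons.mp h with rfl | h2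
      · exact absurd haz (lt_irrefl _)
      · exact h2
  obtain ⟨M1, M2, hM1⟩ := List.append_of_mem hzN2
  have hNew : G.new i = N1 ++ a :: (M1 ++ z :: M2) := by rw [hN1, hM1]
  have hOldSeg : G.blkOldSeg (i, a, z) = a :: (M ++ [z]) := by
    unfold UFN.blkOldSeg
    exact segment_eq hOnd hOld
  have hNewSeg : G.blkNewSeg (i, a, z) = a :: (M1 ++ [z]) := by
    unfold UFN.blkNewSeg
    exact segment_eq hNnd hNew
  have htO : G.t ∈ G.old i := List.mem_of_mem_getLast? (Option.mem_def.mpr hOt)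
  have htN : G.t ∈ G.new i := List.mem_of_mem_getLast? (Option.mem_def.mpr hNt)
  have hat : a ≠ G.t := by
    intro h
    rcases eq_or_ne z G.t with hz | hz
    · exact absurd haz (by rw [h, hz]; exact lt_irrefl _)
    · exact asymm haz (show ordp z < ordp a by rw [h]; exact lt_getLast hPold hOt hzO hz)
  have hM1f : ∀ u ∈ M1, u ∉ G.old i := by
    intro u hu
    have hau : ordp a < ordp u := pairwise_split hPnew
      (show G.new i = (N1 ++ [a]) ++ (M1 ++ z :: M2) by rw [hNew]; simp)
      (by simp) (List.mem_append_left _ hu)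
    have huz : ordp u < ordp z := pairwise_split hPnew
      (show G.new i = (N1 ++ a :: M1) ++ (z :: M2) by rw [hNew]; simp)
      (by simp [hu]) (List.mem_cons_self)
    intro huO
    rw [hOld] at huO
    rcases List.mem_append.mp huO with h | h
    · exact absurd (pairwise_split hPold hOld h (List.mem_cons_self)) (asymm hau)
    rcases List.mem_cons.mp h with rfl | h
    · exact absurd hau (lt_irrefl _)
    rcases List.mem_append.mp h with h | h
    · exact (hMnew u h) (by rw [hNew]; simp [hu])
    rcases List.mem_cons.mp h with rfl | h
    · exact absurd huz (lt_irrefl _)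
    · exact absurd (pairwise_split hPold
        (show G.old i = (pre ++ A2 ++ a :: M ++ [z]) ++ B3 by rw [hOld]; simp)
        (by simp) h) (asymm huz)
  constructor
  · intro v hv hva hvz
    rw [hNewSeg] at hv
    have hvM1 : v ∈ M1 := by
      rcases List.mem_cons.mp hv with rfl | h
      · exact absurd rfl hva
      rcases List.mem_append.mp h with h | h
      · exact h
      · rw [List.mem_singleton] at h
        exact absurd h hvz
    obtain ⟨Tf, hTf, -⟩ := hR (R (a, i)) {(a, i)}
      (by intro u hu; rw [Set.mem_singleton_iff] at hu; rw [hu])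
    have hT := (hTf i).1
    have haT : a ∈ Tf i := common_mem hPold hPnew hOs hOt hT haO haN
    have haU : (a, i) ∈ ({u | R u < R (a, i)} ∪ {(a, i)} : Set (V × Fin k)) :=
      Set.mem_union_right _ rfl
    have hchain : List.Chain' (fun x y => (x, y) ∈ edgesOf (G.new i)) (a :: M1) :=
      (chain'_edgesOf (G.new i)).infix ⟨N1, z :: M2, by rw [hNew]; simp⟩
    have hres := walk_new hT hNnd htO M1 a haT haU hat hchain hM1f v hvM1
    rcases hres.1 with h | h
    · exact h
    · rw [Set.mem_singleton_iff] at h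
      exact absurd (congrArg Prod.fst h) hva
  · intro w hw hwN
    rw [hOldSeg] at hw
    have hwa : w ≠ a := fun h => hwN (h ▸ haN)
    have hwz : w ≠ z := fun h => hwN (h ▸ hzN)
    have hwM : w ∈ M := by
      rcases List.mem_cons.mp hw with rfl | h
      · exact absurd rfl hwa
      rcases List.mem_append.mp h with h | h
      · exact h
      · rw [List.mem_singleton] at h
        exact absurd h hwz
    by_contra hcon
    push_neg at hcon
    obtain ⟨Tf, hTf, -⟩ := hR (R (w, i)) {(w, i)}
      (by intro u hu; rw [Set.mem_singleton_iff] at hu; rw [hu])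
    have hT := (hTf i).1
    have haT : a ∈ Tf i := common_mem hPold hPnew hOs hOt hT haO haN
    have haU : (a, i) ∉ ({u | R u < R (w, i)} ∪ {(w, i)} : Set (V × Fin k)) := by
      rintro (h | h)
      · exact absurd (lt_of_lt_of_le h hcon) (lt_irrefl _)
      · rw [Set.mem_singleton_iff] at h
        exact hwa (congrArg Prod.fst h).symm
    have hchain : List.Chain' (fun x y => (x, y) ∈ edgesOf (G.old i)) (a :: M) :=
      (chain'_edgesOf (G.old i)).infix ⟨pre ++ A2, z :: B3, by rw [hOld]; simp⟩
    have hres := walk_old hT hOnd htN M a haT haU hat hchain hMnew w hwM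
    exact hres.1 (Set.mem_union_right _ rfl)
end

section
/- If there exists any feasible update sequence for an update flow network, then there exists a feasible update sequence in which every block is updated in at most 3 consecutive rounds: first all update-path vertices of the block except its start, then the start vertex, then all remaining (old-path-only) vertices of the block. -/
/-!
A formal model of congestion-free flow rerouting (network update scheduling).
An update flow network consists of a source `s`, a terminal `t`, edge
capacities, and `k` update flow pairs, each given by an old `s`-`t` path and
an update (new) `s`-`t` path (represented as lists of vertices) with a demand.
An update sequence assigns to every update `(v, i)` (vertex `v`, pair `i`) a
round; it is feasible if resolving all updates of earlier rounds together with
any subset of the current round always leaves, for every pair, a unique valid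
(capacity-respecting) transient `s`-`t` path among the active edges, and the
family of transient paths jointly respects the capacities.
-/

namespace FlowUpdate

variable {V : Type} [DecidableEq V] {k : ℕ}

section Aux
set_option linter.unusedSectionVars false

variable {V : Type} [DecidableEq V] {k : ℕ}

/-! ### Generic lemmas about `edgesOf` -/

theorem edgesOf_cons_cons (a b : V) (l : List V) :
    edgesOf (a :: b :: l) = (a, b) :: edgesOf (b :: l) := rfl

theorem mem_edgesOf_iff {x y : V} {l : List V} :
    (x, y) ∈ edgesOf l ↔ ∃ l₁ l₂, l = l₁ ++ x :: y :: l₂ := by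
  induction l with
  | nil => simp [edgesOf]
  | cons a l ih =>
    cases l with
    | nil =>
      simp only [edgesOf, List.zip_nil_right, List.tail]
      constructor
      · intro h; simp at h
      · rintro ⟨l₁, l₂, h⟩
        rcases l₁ with _ | ⟨c, l₁⟩ <;> simp_all
    | cons b l =>
      rw [edgesOf_cons_cons]
      constructor
      · intro h
        rcases List.mem_cons.1 h with h | h
        · exact ⟨[], l, by simp_all⟩
        · obtain ⟨l₁, l₂, hl⟩ := ih.1 h
          exact ⟨a :: l₁, l₂, by simp [hl]⟩
      · rintro ⟨l₁, l₂, hl⟩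
        rcases l₁ with _ | ⟨c, l₁⟩
        · simp at hl
          exact List.mem_cons.2 (Or.inl (by simp [hl.1, hl.2.1]))
        · simp at hl
          exact List.mem_cons.2 (Or.inr (ih.2 ⟨l₁, l₂, hl.2⟩))

theorem edgesOf_of_decomp {x y : V} {l l₁ l₂ : List V} (h : l = l₁ ++ x :: y :: l₂) :
    (x, y) ∈ edgesOf l := mem_edgesOf_iff.2 ⟨l₁, l₂, h⟩

theorem fst_mem_of_edgesOf {x y : V} {l : List V} (h : (x, y) ∈ edgesOf l) : x ∈ l := by
  obtain ⟨l₁, l₂, rfl⟩ := mem_edgesOf_iff.1 h; simp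

theorem snd_mem_of_edgesOf {x y : V} {l : List V} (h : (x, y) ∈ edgesOf l) : y ∈ l := by
  obtain ⟨l₁, l₂, rfl⟩ := mem_edgesOf_iff.1 h; simp

theorem nodup_decomp_unique {x : V} {l₁ l₂ m₁ m₂ : List V}
    (hnd : (l₁ ++ x :: l₂).Nodup) (h : l₁ ++ x :: l₂ = m₁ ++ x :: m₂) :
    l₁ = m₁ ∧ l₂ = m₂ := by
  induction l₁ generalizing m₁ with
  | nil =>
    rcases m₁ with _ | ⟨c, m₁⟩
    · simp_all
    · exfalso
      simp only [List.nil_append, List.cons_append, List.cons.injEq] at h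
      simp only [List.nil_append, List.nodup_cons] at hnd
      exact hnd.1 (by rw [h.2]; simp)
  | cons a l₁ ih =>
    rcases m₁ with _ | ⟨c, m₁⟩
    · exfalso
      simp only [List.cons_append, List.nil_append, List.cons.injEq] at h
      simp only [List.cons_append, List.nodup_cons] at hnd
      exact hnd.1 (by rw [h.1]; simp)
    · simp only [List.cons_append, List.cons.injEq] at h
      obtain ⟨rfl, h2⟩ := h
      simp only [List.cons_append, List.nodup_cons] at hnd
      obtain ⟨h3, h4⟩ := ih hnd.2 h2
      exact ⟨by rw [h3], h4⟩

theorem succ_unique {x y y' : V} {l : List V} (hnd : l.Nodup)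
    (h1 : (x, y) ∈ edgesOf l) (h2 : (x, y') ∈ edgesOf l) : y = y' := by
  obtain ⟨l₁, l₂, hl⟩ := mem_edgesOf_iff.1 h1
  obtain ⟨m₁, m₂, hm⟩ := mem_edgesOf_iff.1 h2
  have := nodup_decomp_unique (hl ▸ hnd) (hl ▸ hm)
  have := this.2
  simp only [List.cons.injEq] at this
  exact this.1

theorem pred_unique {x x' y : V} {l : List V} (hnd : l.Nodup)
    (h1 : (x, y) ∈ edgesOf l) (h2 : (x', y) ∈ edgesOf l) : x = x' := by
  obtain ⟨l₁, l₂, hl⟩ := mem_edgesOf_iff.1 h1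
  obtain ⟨m₁, m₂, hm⟩ := mem_edgesOf_iff.1 h2
  have hl' : l = (l₁ ++ [x]) ++ y :: l₂ := by simp [hl]
  have hm' : l = (m₁ ++ [x']) ++ y :: m₂ := by simp [hm]
  have := (nodup_decomp_unique (hl' ▸ hnd) (hl' ▸ hm')).1
  have := congrArg List.getLast? this
  simpa [List.getLast?_concat] using this

theorem exists_succ_edge {v t : V} {l : List V} (hlast : l.getLast? = some t)
    (hv : v ∈ l) (hne : v ≠ t) : ∃ w, (v, w) ∈ edgesOf l := by
  obtain ⟨l₁, l₂, rfl⟩ := List.append_of_mem hv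
  rcases l₂ with _ | ⟨w, l₂⟩
  · exfalso
    rw [List.getLast?_concat] at hlast
    exact hne (by injection hlast)
  · exact ⟨w, edgesOf_of_decomp rfl⟩

theorem exists_pred_edge {v s : V} {l : List V} (hhead : l.head? = some s)
    (hv : v ∈ l) (hne : v ≠ s) : ∃ w, (w, v) ∈ edgesOf l := by
  obtain ⟨l₁, l₂, rfl⟩ := List.append_of_mem hv
  rcases List.eq_nil_or_concat l₁ with rfl | ⟨m, w, rfl⟩
  · exfalso
    simp only [List.nil_append, List.head?_cons, Option.some.injEq] at hhead
    exact hne hhead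
  · exact ⟨w, edgesOf_of_decomp (l₁ := m) (l₂ := l₂) (by simp [List.concat_eq_append])⟩

theorem no_succ_of_last {t w : V} {l : List V} (hnd : l.Nodup)
    (hlast : l.getLast? = some t) (h : (t, w) ∈ edgesOf l) : False := by
  obtain ⟨l₁, l₂, rfl⟩ := mem_edgesOf_iff.1 h
  have h1 : (l₁ ++ t :: w :: l₂).getLast? = (w :: l₂).getLast? := by
    rw [List.getLast?_append, List.getLast?_cons_cons]
    cases h' : (w :: l₂).getLast? with
    | none => simp at h'
    | some x => simp
  rw [h1] at hlast
  have htmem : t ∈ w :: l₂ := List.mem_of_getLast? hlast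
  rw [List.nodup_append] at hnd
  have := hnd.2.1
  simp only [List.nodup_cons] at this
  exact this.1 htmem

theorem no_pred_of_head {s w : V} {l : List V} (hnd : l.Nodup)
    (hhead : l.head? = some s) (h : (w, s) ∈ edgesOf l) : False := by
  obtain ⟨l₁, l₂, rfl⟩ := mem_edgesOf_iff.1 h
  rcases l₁ with _ | ⟨c, l₁⟩
  · simp only [List.nil_append, List.head?_cons, Option.some.injEq] at hhead
    subst hhead
    simp at hnd
  · simp only [List.cons_append, List.head?_cons, Option.some.injEq] at hhead
    subst hhead
    simp only [List.cons_append, List.nodup_cons] at hnd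
    exact hnd.1 (by simp)

theorem chain'_iff_edges {E : V × V → Prop} {l : List V} :
    List.Chain' (fun u v => E (u, v)) l ↔ ∀ e ∈ edgesOf l, E e := by
  induction l with
  | nil => simp [edgesOf, List.Chain']
  | cons a l ih =>
    cases l with
    | nil => simp [edgesOf, List.Chain']
    | cons b l =>
      simp only [List.Chain'] at ih ⊢
      rw [List.isChain_cons_cons, edgesOf_cons_cons, ih]
      constructor
      · rintro ⟨h1, h2⟩ e he
        rcases List.mem_cons.1 he with rfl | he
        · exact h1
        · exact h2 e he
      · intro h
        exact ⟨h _ (by simp), fun e he => h e (by simp [he])⟩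

/-! ### Filter decomposition lemmas -/

theorem filter_eq_cons_decomp {q : V → Bool} {l : List V} {a : V} {as : List V}
    (h : l.filter q = a :: as) :
    ∃ l₁ l₂, l = l₁ ++ a :: l₂ ∧ (∀ x ∈ l₁, q x = false) ∧ q a = true ∧ l₂.filter q = as := by
  induction l with
  | nil => simp at h
  | cons c l ih =>
    by_cases hc : q c = true
    · rw [List.filter_cons_of_pos hc] at h
      injection h with h1 h2
      exact ⟨[], l, by simp [h1], by simp, h1 ▸ hc, h2⟩
    · rw [List.filter_cons_of_neg hc] at h
      obtain ⟨l₁, l₂, rfl, h2, h3, h4⟩ := ih h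
      exact ⟨c :: l₁, l₂, rfl, by
        intro x hx
        rcases List.mem_cons.1 hx with rfl | hx
        · simpa using hc
        · exact h2 x hx, h3, h4⟩

theorem filter_eq_append_decomp {q : V → Bool} {l : List V} {L₁ L₂ : List V}
    (h : l.filter q = L₁ ++ L₂) :
    ∃ l₁ l₂, l = l₁ ++ l₂ ∧ l₁.filter q = L₁ ∧ l₂.filter q = L₂ := by
  induction l generalizing L₁ with
  | nil =>
    simp only [List.filter_nil] at h
    rcases List.append_eq_nil_iff.1 h.symm with ⟨rfl, rfl⟩
    exact ⟨[], [], by simp⟩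
  | cons c l ih =>
    by_cases hc : q c = true
    · rw [List.filter_cons_of_pos hc] at h
      rcases L₁ with _ | ⟨d, L₁⟩
      · refine ⟨[], c :: l, by simp, by simp, ?_⟩
        rw [List.filter_cons_of_pos hc]
        simpa using h
      · injection h with h1 h2
        obtain ⟨l₁, l₂, rfl, h3, h4⟩ := ih h2
        exact ⟨c :: l₁, l₂, rfl, by rw [List.filter_cons_of_pos hc, h3, h1], h4⟩
    · rw [List.filter_cons_of_neg hc] at h
      obtain ⟨l₁, l₂, rfl, h3, h4⟩ := ih h
      exact ⟨c :: l₁, l₂, rfl, by rw [List.filter_cons_of_neg hc, h3], h4⟩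

theorem filter_eq_concat_decomp {q : V → Bool} {l : List V} {a : V} {as : List V}
    (h : l.filter q = as ++ [a]) :
    ∃ l₁ l₂, l = l₁ ++ a :: l₂ ∧ l₁.filter q = as ∧ q a = true ∧ ∀ x ∈ l₂, q x = false := by
  obtain ⟨l₁, l₂, rfl, h1, h2⟩ := filter_eq_append_decomp h
  obtain ⟨m₁, m₂, rfl, h3, h4, h5⟩ := filter_eq_cons_decomp h2
  refine ⟨l₁ ++ m₁, m₂, by simp, ?_, h4, ?_⟩
  · rw [List.filter_append, h1, List.filter_eq_nil_iff.2 (by simpa using h3)]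
    simp
  · intro x hx
    have := List.filter_eq_nil_iff.1 h5 x hx
    simpa using this

/-- Decomposition of a list according to an edge of its filtered sublist. -/
theorem decomp_of_edge_filter {q : V → Bool} {l : List V} {a z : V}
    (h : (a, z) ∈ edgesOf (l.filter q)) :
    ∃ l₁ m l₃, l = l₁ ++ a :: (m ++ z :: l₃) ∧ (∀ x ∈ m, q x = false) ∧
      q a = true ∧ q z = true := by
  obtain ⟨c₁, c₃, hc⟩ := mem_edgesOf_iff.1 h
  have hc' : l.filter q = (c₁ ++ [a]) ++ (z :: c₃) := by simp [hc]
  obtain ⟨l₁, l₂, rfl, h1, h2⟩ := filter_eq_append_decomp hc'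
  obtain ⟨m₁, m₂, rfl, h3, h4, h5⟩ := filter_eq_concat_decomp h1
  obtain ⟨w₁, w₂, rfl, h6, h7, h8⟩ := filter_eq_cons_decomp h2
  exact ⟨m₁, m₂ ++ w₁, w₂, by simp, by
    intro x hx
    rcases List.mem_append.1 hx with hx | hx
    · exact h5 x hx
    · exact h6 x hx, h4, h7⟩

/-! ### Segment computation -/

theorem dropWhile_ne_append {a : V} {l₁ rest : List V} (ha : a ∉ l₁) :
    (l₁ ++ a :: rest).dropWhile (fun v => decide (v ≠ a)) = a :: rest := by
  induction l₁ with
  | nil => simp [List.dropWhile_cons]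
  | cons c l₁ ih =>
    have hc : c ≠ a := fun h => ha (h ▸ (List.mem_cons_self : c ∈ c :: l₁))
    simp only [List.cons_append, List.dropWhile_cons, decide_eq_true_eq]
    rw [if_pos hc]
    exact ih (fun h => ha (List.mem_cons_of_mem c h))

theorem takeWhile_ne_append {z : V} {m l₃ : List V} (hz : z ∉ m) :
    (m ++ z :: l₃).takeWhile (fun v => decide (v ≠ z)) = m := by
  induction m with
  | nil => simp [List.takeWhile_cons]
  | cons c m ih =>
    have hc : c ≠ z := fun h => hz (h ▸ (List.mem_cons_self : c ∈ c :: m))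
    simp only [List.cons_append, List.takeWhile_cons, decide_eq_true_eq]
    rw [if_pos hc, ih (fun h => hz (List.mem_cons_of_mem c h))]

theorem segment_eq_s2 {l₁ m l₃ : List V} {a z : V}
    (ha : a ∉ l₁) (hza : z ≠ a) (hzm : z ∉ m) :
    segment (l₁ ++ a :: (m ++ z :: l₃)) a z = a :: (m ++ [z]) := by
  unfold segment
  rw [dropWhile_ne_append ha]
  have : (a :: (m ++ z :: l₃)).takeWhile (fun v => decide (v ≠ z)) = a :: m := by
    have : a :: (m ++ z :: l₃) = (a :: m) ++ z :: l₃ := by simp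
    rw [this, takeWhile_ne_append]
    intro h
    rcases List.mem_cons.1 h with h | h
    · exact hza h
    · exact hzm h
  rw [this]
  simp

/-! ### Structure of well-formed networks -/

open UFN in
theorem mem_commons_iff {G : UFN V k} {i : Fin k} {v : V} :
    v ∈ G.commons i ↔ v ∈ G.old i ∧ v ∈ G.new i := by
  simp [UFN.commons, List.mem_filter]

theorem segment_of_nodup_decomp {l l₁ m l₃ : List V} {a z : V} (hnd : l.Nodup)
    (hl : l = l₁ ++ a :: (m ++ z :: l₃)) : segment l a z = a :: (m ++ [z]) := by
  subst hl
  have h1 : a ∉ l₁ := by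
    rw [List.nodup_append] at hnd
    exact fun h => hnd.2.2 a h a (by simp) rfl
  have hnd2 : (a :: (m ++ z :: l₃)).Nodup := (List.nodup_append.1 hnd).2.1
  rw [List.nodup_cons] at hnd2
  have h2 : z ≠ a := fun h => hnd2.1 (h ▸ (by simp : z ∈ m ++ z :: l₃))
  have h3 : z ∉ m := by
    have := hnd2.2
    rw [List.nodup_append] at this
    exact fun h => this.2.2 z h z (by simp) rfl
  exact segment_eq_s2 h1 h2 h3

section WF

variable {G : UFN V k} (hWF : G.WellFormed)

open UFN

include hWF

theorem old_head (i : Fin k) : (G.old i).head? = some G.s := (hWF.1 i).1.1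
theorem old_getLast (i : Fin k) : (G.old i).getLast? = some G.t := (hWF.1 i).1.2.1
theorem old_nodup (i : Fin k) : (G.old i).Nodup := (hWF.1 i).1.2.2
theorem new_head (i : Fin k) : (G.new i).head? = some G.s := (hWF.1 i).2.1
theorem new_getLast (i : Fin k) : (G.new i).getLast? = some G.t := (hWF.1 i).2.2.1
theorem new_nodup (i : Fin k) : (G.new i).Nodup := (hWF.1 i).2.2.2

theorem s_mem_old (i : Fin k) : G.s ∈ G.old i :=
  List.mem_of_mem_head? (by rw [old_head hWF i]; rfl)
theorem s_mem_new (i : Fin k) : G.s ∈ G.new i :=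
  List.mem_of_mem_head? (by rw [new_head hWF i]; rfl)
theorem t_mem_old (i : Fin k) : G.t ∈ G.old i :=
  List.mem_of_getLast? (old_getLast hWF i)
theorem t_mem_new (i : Fin k) : G.t ∈ G.new i :=
  List.mem_of_getLast? (new_getLast hWF i)

theorem commons_nodup (i : Fin k) : (G.commons i).Nodup :=
  (old_nodup hWF i).filter _

theorem ord_edges (i : Fin k) : ∃ ord : V → ℕ,
    (∀ e ∈ edgesOf (G.old i), ord e.1 < ord e.2) ∧
    (∀ e ∈ edgesOf (G.new i), ord e.1 < ord e.2) := by
  obtain ⟨ord, hord⟩ := hWF.2.1 i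
  exact ⟨ord, fun e he => hord e (List.mem_append_left _ he),
    fun e he => hord e (List.mem_append_right _ he)⟩

/-- The commons can also be computed in the order of the new path. -/
theorem commons_eq_new_filter (i : Fin k) :
    G.commons i = (G.new i).filter (fun v => decide (v ∈ G.old i)) := by
  obtain ⟨ord, hordO, hordN⟩ := ord_edges hWF i
  set r : V → V → Prop := fun a b => ord a < ord b with hr
  haveI : IsTrans V r := ⟨fun a b c h1 h2 => Nat.lt_trans h1 h2⟩
  haveI : IsAntisymm V r := ⟨fun a b h1 h2 => absurd h2 (Nat.lt_asymm h1)⟩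
  have hOp : (G.old i).Pairwise r := by
    rw [← List.isChain_iff_pairwise]
    rw [show (List.IsChain r (G.old i)) =
      (List.Chain' (fun u v => (fun e : V × V => r e.1 e.2) (u, v)) (G.old i)) from rfl]
    exact chain'_iff_edges.2 (fun e he => hordO e he)
  have hNp : (G.new i).Pairwise r := by
    rw [← List.isChain_iff_pairwise]
    rw [show (List.IsChain r (G.new i)) =
      (List.Chain' (fun u v => (fun e : V × V => r e.1 e.2) (u, v)) (G.new i)) from rfl]
    exact chain'_iff_edges.2 (fun e he => hordN e he)
  have h1 : (G.commons i).Pairwise r := hOp.filter _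
  have h2 : ((G.new i).filter (fun v => decide (v ∈ G.old i))).Pairwise r := hNp.filter _
  have hperm : List.Perm (G.commons i) ((G.new i).filter (fun v => decide (v ∈ G.old i))) := by
    rw [List.perm_ext_iff_of_nodup (commons_nodup hWF i) ((new_nodup hWF i).filter _)]
    intro a
    simp only [mem_commons_iff, List.mem_filter, decide_eq_true_eq]
    tauto
  exact hperm.eq_of_pairwise (fun a b _ _ h1 h2 => absurd h2 (Nat.lt_asymm h1)) h1 h2

theorem commons_head (i : Fin k) : (G.commons i).head? = some G.s := by
  obtain ⟨l, hl⟩ : ∃ l, G.old i = G.s :: l := by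
    cases ho : G.old i with
    | nil => exact absurd (old_head hWF i) (by rw [ho]; simp)
    | cons a l =>
      have h2 := old_head hWF i
      rw [ho] at h2
      simp only [List.head?_cons, Option.some.injEq] at h2
      exact ⟨l, by rw [h2]⟩
  show ((G.old i).filter _).head? = _
  rw [hl, List.filter_cons_of_pos (by simpa using s_mem_new hWF i)]
  rfl

theorem commons_getLast (i : Fin k) : (G.commons i).getLast? = some G.t := by
  have hne : G.old i ≠ [] := by
    intro h; exact absurd (old_getLast hWF i) (by rw [h]; simp)
  have hgl : (G.old i).getLast hne = G.t := by
    have h2 := List.getLast?_eq_getLast hne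
    rw [old_getLast hWF i] at h2
    injection h2 with h3
    exact h3.symm
  have hdec : G.old i = (G.old i).dropLast ++ [G.t] := by
    conv_lhs => rw [← List.dropLast_append_getLast hne]
    rw [hgl]
  show ((G.old i).filter _).getLast? = _
  rw [hdec, List.filter_append, List.filter_cons_of_pos (by simpa using t_mem_new hWF i)]
  simp [List.getLast?_append]

/-- Decomposition of the old path according to a block. -/
theorem block_decomp_old {i : Fin k} {a z : V} (hb : (a, z) ∈ edgesOf (G.commons i)) :
    ∃ l₁ m l₃, G.old i = l₁ ++ a :: (m ++ z :: l₃) ∧ (∀ x ∈ m, x ∉ G.new i) ∧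
      a ∈ G.new i ∧ z ∈ G.new i := by
  obtain ⟨l₁, m, l₃, h1, h2, h3, h4⟩ := decomp_of_edge_filter (q := fun v => decide (v ∈ G.new i))
    (l := G.old i) hb
  exact ⟨l₁, m, l₃, h1, fun x hx => by simpa using h2 x hx, by simpa using h3, by simpa using h4⟩

/-- Decomposition of the new path according to a block. -/
theorem block_decomp_new {i : Fin k} {a z : V} (hb : (a, z) ∈ edgesOf (G.commons i)) :
    ∃ l₁ m l₃, G.new i = l₁ ++ a :: (m ++ z :: l₃) ∧ (∀ x ∈ m, x ∉ G.old i) ∧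
      a ∈ G.old i ∧ z ∈ G.old i := by
  rw [commons_eq_new_filter hWF i] at hb
  obtain ⟨l₁, m, l₃, h1, h2, h3, h4⟩ := decomp_of_edge_filter (q := fun v => decide (v ∈ G.old i))
    (l := G.new i) hb
  exact ⟨l₁, m, l₃, h1, fun x hx => by simpa using h2 x hx, by simpa using h3, by simpa using h4⟩


/-! ### Forced-walk lemmas -/

section Walk

variable {U : Set (V × Fin k)} {i : Fin k} {p : List V}
  (hp : UFN.IsPathIn (G.active U i) G.s G.t p)

include hp

theorem walk_back_old {a z : V} {l₁ m l₃ : List V}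
    (hdec : G.old i = l₁ ++ a :: (m ++ z :: l₃)) (hm : ∀ x ∈ m, x ∉ G.new i)
    {v : V} (hv : v ∈ m) (hvp : v ∈ p) : a ∈ p ∧ (a, i) ∉ U := by
  obtain ⟨hph, hpl, hpc, hpn⟩ := hp
  have hedge := chain'_iff_edges.1 hpc
  obtain ⟨ord, hordO, hordN⟩ := ord_edges hWF i
  have main : ∀ n v, ord v = n → v ∈ m → v ∈ p → a ∈ p ∧ (a, i) ∉ U := by
    intro n
    induction n using Nat.strong_induction_on with
    | _ n ih =>
      intro v hvord hvm hvp
      have hvN : v ∉ G.new i := hm v hvm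
      have hvs : v ≠ G.s := fun h => hvN (h ▸ s_mem_new hWF i)
      obtain ⟨w, hwv⟩ := exists_pred_edge hph hvp hvs
      have hact : G.active U i (w, v) := hedge _ hwv
      have hwp : w ∈ p := fst_mem_of_edgesOf hwv
      rcases hact with ⟨hO, hwU⟩ | ⟨hN, _⟩
      swap
      · exact absurd (snd_mem_of_edgesOf hN) hvN
      obtain ⟨x₁, x₂, hx⟩ := List.append_of_mem hvm
      have hdec2 : G.old i = (l₁ ++ a :: x₁) ++ v :: (x₂ ++ z :: l₃) := by
        rw [hdec, hx]; simp
      rcases List.eq_nil_or_concat x₁ with rfl | ⟨y₁, u, rfl⟩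
      · have hav : (a, v) ∈ edgesOf (G.old i) := by
          apply edgesOf_of_decomp (l₁ := l₁) (l₂ := x₂ ++ z :: l₃)
          simpa using hdec2
        have hwa : w = a := pred_unique (old_nodup hWF i) hO hav
        exact ⟨hwa ▸ hwp, hwa ▸ hwU⟩
      · have huv : (u, v) ∈ edgesOf (G.old i) := by
          apply edgesOf_of_decomp (l₁ := l₁ ++ a :: y₁) (l₂ := x₂ ++ z :: l₃)
          rw [hdec2]; simp [List.concat_eq_append]
        have hwu : w = u := pred_unique (old_nodup hWF i) hO huv
        have hlt : ord u < ord v := hordO (u, v) huv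
        have hum : u ∈ m := by rw [hx]; simp [List.concat_eq_append]
        exact ih (ord u) (hvord ▸ hlt) u rfl hum (hwu ▸ hwp)
  exact main (ord v) v rfl hv hvp

theorem walk_back_new {a z : V} {l₁ m l₃ : List V}
    (hdec : G.new i = l₁ ++ a :: (m ++ z :: l₃)) (hm : ∀ x ∈ m, x ∉ G.old i)
    {v : V} (hv : v ∈ m) (hvp : v ∈ p) : a ∈ p ∧ (a, i) ∈ U := by
  obtain ⟨hph, hpl, hpc, hpn⟩ := hp
  have hedge := chain'_iff_edges.1 hpc
  obtain ⟨ord, hordO, hordN⟩ := ord_edges hWF i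
  have main : ∀ n v, ord v = n → v ∈ m → v ∈ p → a ∈ p ∧ (a, i) ∈ U := by
    intro n
    induction n using Nat.strong_induction_on with
    | _ n ih =>
      intro v hvord hvm hvp
      have hvO : v ∉ G.old i := hm v hvm
      have hvs : v ≠ G.s := fun h => hvO (h ▸ s_mem_old hWF i)
      obtain ⟨w, hwv⟩ := exists_pred_edge hph hvp hvs
      have hact : G.active U i (w, v) := hedge _ hwv
      have hwp : w ∈ p := fst_mem_of_edgesOf hwv
      rcases hact with ⟨hO, _⟩ | ⟨hN, hwU⟩
      · exact absurd (snd_mem_of_edgesOf hO) hvO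
      obtain ⟨x₁, x₂, hx⟩ := List.append_of_mem hvm
      have hdec2 : G.new i = (l₁ ++ a :: x₁) ++ v :: (x₂ ++ z :: l₃) := by
        rw [hdec, hx]; simp
      rcases List.eq_nil_or_concat x₁ with rfl | ⟨y₁, u, rfl⟩
      · have hav : (a, v) ∈ edgesOf (G.new i) := by
          apply edgesOf_of_decomp (l₁ := l₁) (l₂ := x₂ ++ z :: l₃)
          simpa using hdec2
        have hwa : w = a := pred_unique (new_nodup hWF i) hN hav
        exact ⟨hwa ▸ hwp, hwa ▸ hwU⟩
      · have huv : (u, v) ∈ edgesOf (G.new i) := by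
          apply edgesOf_of_decomp (l₁ := l₁ ++ a :: y₁) (l₂ := x₂ ++ z :: l₃)
          rw [hdec2]; simp [List.concat_eq_append]
        have hwu : w = u := pred_unique (new_nodup hWF i) hN huv
        have hlt : ord u < ord v := hordN (u, v) huv
        have hum : u ∈ m := by rw [hx]; simp [List.concat_eq_append]
        exact ih (ord u) (hvord ▸ hlt) u rfl hum (hwu ▸ hwp)
  exact main (ord v) v rfl hv hvp

theorem walk_fwd_old {a z : V} {l₁ m l₃ : List V}
    (hdec : G.old i = l₁ ++ a :: (m ++ z :: l₃)) (hm : ∀ x ∈ m, x ∉ G.new i)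
    (hap : a ∈ p) (haU : (a, i) ∉ U) :
    ∀ v ∈ m, v ∈ p ∧ (v, i) ∉ U := by
  obtain ⟨hph, hpl, hpc, hpn⟩ := hp
  have hedge := chain'_iff_edges.1 hpc
  obtain ⟨ord, hordO, hordN⟩ := ord_edges hWF i
  -- a ≠ t since a has a successor on the old path
  have hat : a ≠ G.t := by
    intro h
    subst h
    cases m with
    | nil =>
      exact no_succ_of_last (old_nodup hWF i) (old_getLast hWF i)
        (edgesOf_of_decomp (l₁ := l₁) (l₂ := l₃) (by simpa using hdec))
    | cons u₀ m' =>
      exact no_succ_of_last (old_nodup hWF i) (old_getLast hWF i)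
        (edgesOf_of_decomp (l₁ := l₁) (l₂ := m' ++ z :: l₃) (by simpa using hdec))
    -- the successor of t on the old path would contradict nodup/getLast
  -- state of a vertex once known to be on p and not on the new path
  have hstate : ∀ v ∈ m, v ∈ p → (v, i) ∉ U := by
    intro v hvm hvp
    have hvN : v ∉ G.new i := hm v hvm
    have hvt : v ≠ G.t := fun h => hvN (h ▸ t_mem_new hWF i)
    obtain ⟨y, hvy⟩ := exists_succ_edge hpl hvp hvt
    have hact : G.active U i (v, y) := hedge _ hvy
    rcases hact with ⟨_, hvU⟩ | ⟨hN, _⟩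
    · exact hvU
    · exact absurd (fst_mem_of_edgesOf hN) hvN
  have main : ∀ n v, ord v = n → v ∈ m → v ∈ p := by
    intro n
    induction n using Nat.strong_induction_on with
    | _ n ih =>
      intro v hvord hvm
      obtain ⟨x₁, x₂, hx⟩ := List.append_of_mem hvm
      have hdec2 : G.old i = (l₁ ++ a :: x₁) ++ v :: (x₂ ++ z :: l₃) := by
        rw [hdec, hx]; simp
      rcases List.eq_nil_or_concat x₁ with rfl | ⟨y₁, u, rfl⟩
      · -- the predecessor of v is a
        have hav : (a, v) ∈ edgesOf (G.old i) := by
          apply edgesOf_of_decomp (l₁ := l₁) (l₂ := x₂ ++ z :: l₃)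
          simpa using hdec2
        obtain ⟨y, hay⟩ := exists_succ_edge hpl hap hat
        have hact : G.active U i (a, y) := hedge _ hay
        rcases hact with ⟨hOy, _⟩ | ⟨_, haU'⟩
        swap
        · exact absurd haU' haU
        have : y = v := succ_unique (old_nodup hWF i) hOy hav
        exact this ▸ snd_mem_of_edgesOf hay
      · -- the predecessor of v is u ∈ m
        have huv : (u, v) ∈ edgesOf (G.old i) := by
          apply edgesOf_of_decomp (l₁ := l₁ ++ a :: y₁) (l₂ := x₂ ++ z :: l₃)
          rw [hdec2]; simp [List.concat_eq_append]
        have hum : u ∈ m := by rw [hx]; simp [List.concat_eq_append]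
        have hlt : ord u < ord v := hordO (u, v) huv
        have hup : u ∈ p := ih (ord u) (hvord ▸ hlt) u rfl hum
        have huU : (u, i) ∉ U := hstate u hum hup
        have huN : u ∉ G.new i := hm u hum
        have hut : u ≠ G.t := fun h => huN (h ▸ t_mem_new hWF i)
        obtain ⟨y, huy⟩ := exists_succ_edge hpl hup hut
        have hact : G.active U i (u, y) := hedge _ huy
        rcases hact with ⟨hOy, _⟩ | ⟨hN, _⟩
        swap
        · exact absurd (fst_mem_of_edgesOf hN) huN
        have : y = v := succ_unique (old_nodup hWF i) hOy huv
        exact this ▸ snd_mem_of_edgesOf huy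
  exact fun v hv => ⟨main (ord v) v rfl hv, hstate v hv (main (ord v) v rfl hv)⟩

theorem walk_fwd_new {a z : V} {l₁ m l₃ : List V}
    (hdec : G.new i = l₁ ++ a :: (m ++ z :: l₃)) (hm : ∀ x ∈ m, x ∉ G.old i)
    (hap : a ∈ p) (haU : (a, i) ∈ U) :
    ∀ v ∈ m, v ∈ p ∧ (v, i) ∈ U := by
  obtain ⟨hph, hpl, hpc, hpn⟩ := hp
  have hedge := chain'_iff_edges.1 hpc
  obtain ⟨ord, hordO, hordN⟩ := ord_edges hWF i
  have hat : a ≠ G.t := by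
    intro h
    subst h
    cases m with
    | nil =>
      exact no_succ_of_last (new_nodup hWF i) (new_getLast hWF i)
        (edgesOf_of_decomp (l₁ := l₁) (l₂ := l₃) (by simpa using hdec))
    | cons u₀ m' =>
      exact no_succ_of_last (new_nodup hWF i) (new_getLast hWF i)
        (edgesOf_of_decomp (l₁ := l₁) (l₂ := m' ++ z :: l₃) (by simpa using hdec))
  have hstate : ∀ v ∈ m, v ∈ p → (v, i) ∈ U := by
    intro v hvm hvp
    have hvO : v ∉ G.old i := hm v hvm
    have hvt : v ≠ G.t := fun h => hvO (h ▸ t_mem_old hWF i)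
    obtain ⟨y, hvy⟩ := exists_succ_edge hpl hvp hvt
    have hact : G.active U i (v, y) := hedge _ hvy
    rcases hact with ⟨hO, _⟩ | ⟨_, hvU⟩
    · exact absurd (fst_mem_of_edgesOf hO) hvO
    · exact hvU
  have main : ∀ n v, ord v = n → v ∈ m → v ∈ p := by
    intro n
    induction n using Nat.strong_induction_on with
    | _ n ih =>
      intro v hvord hvm
      obtain ⟨x₁, x₂, hx⟩ := List.append_of_mem hvm
      have hdec2 : G.new i = (l₁ ++ a :: x₁) ++ v :: (x₂ ++ z :: l₃) := by
        rw [hdec, hx]; simp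
      rcases List.eq_nil_or_concat x₁ with rfl | ⟨y₁, u, rfl⟩
      · have hav : (a, v) ∈ edgesOf (G.new i) := by
          apply edgesOf_of_decomp (l₁ := l₁) (l₂ := x₂ ++ z :: l₃)
          simpa using hdec2
        obtain ⟨y, hay⟩ := exists_succ_edge hpl hap hat
        have hact : G.active U i (a, y) := hedge _ hay
        rcases hact with ⟨_, haU'⟩ | ⟨hNy, _⟩
        · exact absurd haU haU'
        have : y = v := succ_unique (new_nodup hWF i) hNy hav
        exact this ▸ snd_mem_of_edgesOf hay
      · have huv : (u, v) ∈ edgesOf (G.new i) := by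
          apply edgesOf_of_decomp (l₁ := l₁ ++ a :: y₁) (l₂ := x₂ ++ z :: l₃)
          rw [hdec2]; simp [List.concat_eq_append]
        have hum : u ∈ m := by rw [hx]; simp [List.concat_eq_append]
        have hlt : ord u < ord v := hordN (u, v) huv
        have hup : u ∈ p := ih (ord u) (hvord ▸ hlt) u rfl hum
        have huU : (u, i) ∈ U := hstate u hum hup
        have huO : u ∉ G.old i := hm u hum
        have hut : u ≠ G.t := fun h => huO (h ▸ t_mem_old hWF i)
        obtain ⟨y, huy⟩ := exists_succ_edge hpl hup hut
        have hact : G.active U i (u, y) := hedge _ huy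
        rcases hact with ⟨hO, _⟩ | ⟨hNy, _⟩
        · exact absurd (fst_mem_of_edgesOf hO) huO
        have : y = v := succ_unique (new_nodup hWF i) hNy huv
        exact this ▸ snd_mem_of_edgesOf huy
  exact fun v hv => ⟨main (ord v) v rfl hv, hstate v hv (main (ord v) v rfl hv)⟩

/-- Every common vertex lies on any active `s`-`t` path. -/
theorem walk_commons : ∀ c ∈ G.commons i, c ∈ p := by
  have hstep : ∀ c c', (c, c') ∈ edgesOf (G.commons i) → c' ∈ p → c ∈ p := by
    intro c c' hcc' hc'p
    have hc's : c' ≠ G.s := by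
      intro h
      exact no_pred_of_head (commons_nodup hWF i) (commons_head hWF i) (h ▸ hcc')
    obtain ⟨w, hwc'⟩ := exists_pred_edge hp.1 hc'p hc's
    have hact : G.active U i (w, c') := (chain'_iff_edges.1 hp.2.2.1) _ hwc'
    have hwp : w ∈ p := fst_mem_of_edgesOf hwc'
    rcases hact with ⟨hO, _⟩ | ⟨hN, _⟩
    · obtain ⟨l₁, m, l₃, hdec, hm, _, _⟩ := block_decomp_old hWF hcc'
      have hm' : ∀ x ∈ m, x ∉ G.new i := hm
      rcases List.eq_nil_or_concat m with rfl | ⟨y₁, u, rfl⟩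
      · have hcv : (c, c') ∈ edgesOf (G.old i) := by
          apply edgesOf_of_decomp (l₁ := l₁) (l₂ := l₃)
          simpa using hdec
        have : w = c := pred_unique (old_nodup hWF i) hO hcv
        exact this ▸ hwp
      · have huv : (u, c') ∈ edgesOf (G.old i) := by
          apply edgesOf_of_decomp (l₁ := l₁ ++ c :: y₁) (l₂ := l₃)
          rw [hdec]; simp [List.concat_eq_append]
        have hwu : w = u := pred_unique (old_nodup hWF i) hO huv
        have hum : u ∈ y₁.concat u := by simp [List.concat_eq_append]
        exact (walk_back_old hWF hp hdec hm' hum (hwu ▸ hwp)).1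
    · obtain ⟨l₁, m, l₃, hdec, hm, _, _⟩ := block_decomp_new hWF hcc'
      rcases List.eq_nil_or_concat m with rfl | ⟨y₁, u, rfl⟩
      · have hcv : (c, c') ∈ edgesOf (G.new i) := by
          apply edgesOf_of_decomp (l₁ := l₁) (l₂ := l₃)
          simpa using hdec
        have : w = c := pred_unique (new_nodup hWF i) hN hcv
        exact this ▸ hwp
      · have huv : (u, c') ∈ edgesOf (G.new i) := by
          apply edgesOf_of_decomp (l₁ := l₁ ++ c :: y₁) (l₂ := l₃)
          rw [hdec]; simp [List.concat_eq_append]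
        have hwu : w = u := pred_unique (new_nodup hWF i) hN huv
        have hum : u ∈ y₁.concat u := by simp [List.concat_eq_append]
        exact (walk_back_new hWF hp hdec hm hum (hwu ▸ hwp)).1
  have aux : ∀ l : List V, (∃ pre, G.commons i = pre ++ l) → ∀ c ∈ l, c ∈ p := by
    intro l
    induction l with
    | nil => intro _ c hc; simp at hc
    | cons c l' ih =>
      rintro ⟨pre, hpre⟩ c₀ hc₀
      have hrest : ∀ c' ∈ l', c' ∈ p := ih ⟨pre ++ [c], by simp [hpre]⟩
      rcases List.mem_cons.1 hc₀ with rfl | hc₀'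
      · cases l' with
        | nil =>
          have : (G.commons i).getLast? = some c₀ := by rw [hpre, List.getLast?_concat]
          rw [commons_getLast hWF i] at this
          injection this with h
          exact List.mem_of_getLast? (h ▸ hp.2.1)
        | cons c' l'' =>
          have hedge : (c₀, c') ∈ edgesOf (G.commons i) :=
            edgesOf_of_decomp (l₁ := pre) (l₂ := l'') hpre
          exact hstep c₀ c' hedge (hrest c' (by simp))
      · exact hrest c₀ hc₀'
  exact aux (G.commons i) ⟨[], rfl⟩

end Walk

end WF

/-! ### Interior membership and block classification -/

theorem interior_mem_iff {l l₁ m l₃ : List V} {a z : V} (hnd : l.Nodup)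
    (hl : l = l₁ ++ a :: (m ++ z :: l₃)) {v : V} :
    v ∈ m ↔ (v ∈ segment l a z ∧ v ≠ a ∧ v ≠ z) := by
  rw [segment_of_nodup_decomp hnd hl]
  have hnd2 : (a :: (m ++ z :: l₃)).Nodup := by
    rw [hl, List.nodup_append] at hnd; exact hnd.2.1
  rw [List.nodup_cons] at hnd2
  have ham : a ∉ m := fun h => hnd2.1 (by simp [h])
  have hzm : z ∉ m := by
    have := hnd2.2
    rw [List.nodup_append] at this
    exact fun h => this.2.2 z h z (by simp) rfl
  constructor
  · intro hv
    exact ⟨by simp [hv], fun h => ham (h ▸ hv), fun h => hzm (h ▸ hv)⟩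
  · rintro ⟨hv, hva, hvz⟩
    rcases List.mem_cons.1 hv with rfl | hv
    · exact absurd rfl hva
    rcases List.mem_append.1 hv with hv | hv
    · exact hv
    · simp only [List.mem_singleton] at hv
      exact absurd hv hvz

section WF2

variable {G : UFN V k} (hWF : G.WellFormed)

open UFN

include hWF

theorem exists_block_old {i : Fin k} {u : V} (huO : u ∈ G.old i) (huN : u ∉ G.new i) :
    ∃ a z l₁ m l₃, (a, z) ∈ edgesOf (G.commons i) ∧ G.old i = l₁ ++ a :: (m ++ z :: l₃) ∧
      (∀ x ∈ m, x ∉ G.new i) ∧ u ∈ m := by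
  set q : V → Bool := fun v => decide (v ∈ G.new i) with hq
  obtain ⟨l₁, l₂, hdec⟩ := List.append_of_mem huO
  -- l₁ is nonempty and contains s
  have hl₁ : ∃ c l₁', l₁ = c :: l₁' ∧ c = G.s := by
    cases hl : l₁ with
    | nil =>
      exfalso
      have := old_head hWF i
      rw [hdec, hl] at this
      simp only [List.nil_append, List.head?_cons, Option.some.injEq] at this
      exact huN (this ▸ s_mem_new hWF i)
    | cons c l₁' =>
      have := old_head hWF i
      rw [hdec, hl] at this
      simp only [List.cons_append, List.head?_cons, Option.some.injEq] at this
      exact ⟨c, l₁', rfl, this⟩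
  obtain ⟨c, l₁', rfl, rfl⟩ := hl₁
  have hfl₁ : l₁'.filter q ≠ [] ∨ q G.s = true := Or.inr (by simpa [hq] using s_mem_new hWF i)
  have hfne : (G.s :: l₁').filter q ≠ [] := by
    rw [List.filter_cons_of_pos (by simpa [hq] using s_mem_new hWF i)]
    simp
  obtain ⟨A, w, hAw⟩ : ∃ A w, (G.s :: l₁').filter q = A ++ [w] := by
    rcases List.eq_nil_or_concat ((G.s :: l₁').filter q) with h | ⟨A, w, h⟩
    · exact absurd h hfne
    · exact ⟨A, w, by rw [h, List.concat_eq_append]⟩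
  obtain ⟨m₁, m₂, hdecl₁, hfm₁, hqw, hm₂⟩ := filter_eq_concat_decomp hAw
  -- l₂ contains t
  have htl₂ : G.t ∈ l₂ := by
    have hgl := old_getLast hWF i
    rw [hdec] at hgl
    have h1 : ((G.s :: l₁') ++ u :: l₂).getLast? = (u :: l₂).getLast? := by
      rw [List.getLast?_append]
      cases h' : (u :: l₂).getLast? with
      | none => simp at h'
      | some x => simp
    rw [h1] at hgl
    have := List.mem_of_getLast? hgl
    rcases List.mem_cons.1 this with h | h
    · exact absurd (h ▸ t_mem_new hWF i) (h ▸ huN)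
    · exact h
  have hfne2 : l₂.filter q ≠ [] := by
    intro h
    exact absurd (by simpa [hq] using (List.filter_eq_nil_iff.1 h) G.t htl₂) (by simpa using t_mem_new hWF i)
  obtain ⟨z, rest, hzrest⟩ : ∃ z rest, l₂.filter q = z :: rest := by
    cases h : l₂.filter q with
    | nil => exact absurd h hfne2
    | cons z rest => exact ⟨z, rest, rfl⟩
  obtain ⟨w₁, w₂, hdecl₂, hw₁, hqz, hw₂⟩ := filter_eq_cons_decomp hzrest
  refine ⟨w, z, m₁, m₂ ++ u :: w₁, w₂, ?_, ?_, ?_, by simp⟩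
  · -- (w, z) ∈ edgesOf (commons)
    have hcom : G.commons i = A ++ w :: z :: rest := by
      show (G.old i).filter q = _
      rw [hdec, List.filter_append, hAw, List.filter_cons_of_neg (by simpa [hq] using huN),
        hzrest]
      simp
    exact edgesOf_of_decomp (l₁ := A) (l₂ := rest) hcom
  · rw [hdec, hdecl₁, hdecl₂]; simp
  · intro x hx
    rcases List.mem_append.1 hx with hx | hx
    · simpa [hq] using hm₂ x hx
    rcases List.mem_cons.1 hx with rfl | hx
    · exact huN
    · simpa [hq] using hw₁ x hx

theorem exists_block_new {i : Fin k} {u : V} (huN : u ∈ G.new i) (huO : u ∉ G.old i) :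
    ∃ a z l₁ m l₃, (a, z) ∈ edgesOf (G.commons i) ∧ G.new i = l₁ ++ a :: (m ++ z :: l₃) ∧
      (∀ x ∈ m, x ∉ G.old i) ∧ u ∈ m := by
  set q : V → Bool := fun v => decide (v ∈ G.old i) with hq
  obtain ⟨l₁, l₂, hdec⟩ := List.append_of_mem huN
  have hl₁ : ∃ c l₁', l₁ = c :: l₁' ∧ c = G.s := by
    cases hl : l₁ with
    | nil =>
      exfalso
      have := new_head hWF i
      rw [hdec, hl] at this
      simp only [List.nil_append, List.head?_cons, Option.some.injEq] at this
      exact huO (this ▸ s_mem_old hWF i)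
    | cons c l₁' =>
      have := new_head hWF i
      rw [hdec, hl] at this
      simp only [List.cons_append, List.head?_cons, Option.some.injEq] at this
      exact ⟨c, l₁', rfl, this⟩
  obtain ⟨c, l₁', rfl, rfl⟩ := hl₁
  have hfne : (G.s :: l₁').filter q ≠ [] := by
    rw [List.filter_cons_of_pos (by simpa [hq] using s_mem_old hWF i)]
    simp
  obtain ⟨A, w, hAw⟩ : ∃ A w, (G.s :: l₁').filter q = A ++ [w] := by
    rcases List.eq_nil_or_concat ((G.s :: l₁').filter q) with h | ⟨A, w, h⟩
    · exact absurd h hfne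
    · exact ⟨A, w, by rw [h, List.concat_eq_append]⟩
  obtain ⟨m₁, m₂, hdecl₁, hfm₁, hqw, hm₂⟩ := filter_eq_concat_decomp hAw
  have htl₂ : G.t ∈ l₂ := by
    have hgl := new_getLast hWF i
    rw [hdec] at hgl
    have h1 : ((G.s :: l₁') ++ u :: l₂).getLast? = (u :: l₂).getLast? := by
      rw [List.getLast?_append]
      cases h' : (u :: l₂).getLast? with
      | none => simp at h'
      | some x => simp
    rw [h1] at hgl
    have := List.mem_of_getLast? hgl
    rcases List.mem_cons.1 this with h | h
    · exact absurd (h ▸ t_mem_old hWF i) (h ▸ huO)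
    · exact h
  have hfne2 : l₂.filter q ≠ [] := by
    intro h
    exact absurd (by simpa [hq] using (List.filter_eq_nil_iff.1 h) G.t htl₂) (by simpa using t_mem_old hWF i)
  obtain ⟨z, rest, hzrest⟩ : ∃ z rest, l₂.filter q = z :: rest := by
    cases h : l₂.filter q with
    | nil => exact absurd h hfne2
    | cons z rest => exact ⟨z, rest, rfl⟩
  obtain ⟨w₁, w₂, hdecl₂, hw₁, hqz, hw₂⟩ := filter_eq_cons_decomp hzrest
  refine ⟨w, z, m₁, m₂ ++ u :: w₁, w₂, ?_, ?_, ?_, by simp⟩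
  · have hcom : G.commons i = A ++ w :: z :: rest := by
      rw [commons_eq_new_filter hWF i]
      rw [hdec, List.filter_append, hAw, List.filter_cons_of_neg (by simpa [hq] using huO),
        hzrest]
      simp
    exact edgesOf_of_decomp (l₁ := A) (l₂ := rest) hcom
  · rw [hdec, hdecl₁, hdecl₂]; simp
  · intro x hx
    rcases List.mem_append.1 hx with hx | hx
    · simpa [hq] using hm₂ x hx
    rcases List.mem_cons.1 hx with rfl | hx
    · exact huO
    · simpa [hq] using hw₁ x hx

end WF2

/-! ### Consistency and transfer -/

/-- Per-block consistency of an update set: if the start of a block is updated,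
all interior new-path vertices are updated; if not, no interior old-path vertex
is updated. -/
def Consistent (G : UFN V k) (U : Set (V × Fin k)) : Prop :=
  ∀ i a z, (a, z) ∈ edgesOf (G.commons i) →
    (((a, i) ∈ U → ∀ v ∈ segment (G.new i) a z, v ≠ a → v ≠ z → (v, i) ∈ U) ∧
     ((a, i) ∉ U → ∀ v ∈ segment (G.old i) a z, v ≠ a → v ≠ z → (v, i) ∉ U))

/-- Two update sets agree on all block start vertices. -/
def StartAgree (G : UFN V k) (U U' : Set (V × Fin k)) : Prop :=
  ∀ i a z, (a, z) ∈ edgesOf (G.commons i) → ((a, i) ∈ U ↔ (a, i) ∈ U')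

theorem StartAgree.symm {G : UFN V k} {U U' : Set (V × Fin k)} (h : StartAgree G U U') :
    StartAgree G U' U := fun i a z hb => (h i a z hb).symm

section WF3

variable {G : UFN V k} (hWF : G.WellFormed)

open UFN

include hWF

theorem consistent_of_transientFamily {U : Set (V × Fin k)} (h : G.TransientFamily U) :
    Consistent G U := by
  obtain ⟨T, hT, _⟩ := h
  intro i a z hb
  have hp := (hT i).1
  have hap : a ∈ T i := walk_commons hWF hp a (fst_mem_of_edgesOf hb)
  constructor
  · intro haU v hvseg hva hvz
    obtain ⟨l₁, m, l₃, hdec, hm, _, _⟩ := block_decomp_new hWF hb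
    have hvm : v ∈ m := (interior_mem_iff (new_nodup hWF i) hdec).2 ⟨hvseg, hva, hvz⟩
    exact (walk_fwd_new hWF hp hdec hm hap haU v hvm).2
  · intro haU v hvseg hva hvz
    obtain ⟨l₁, m, l₃, hdec, hm, _, _⟩ := block_decomp_old hWF hb
    have hvm : v ∈ m := (interior_mem_iff (old_nodup hWF i) hdec).2 ⟨hvseg, hva, hvz⟩
    exact (walk_fwd_old hWF hp hdec hm hap haU v hvm).2

theorem active_transfer {U U' : Set (V × Fin k)} (hCU' : Consistent G U')
    (hSA : StartAgree G U U') {i : Fin k} {p : List V}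
    (hp : UFN.IsPathIn (G.active U i) G.s G.t p) :
    ∀ e ∈ edgesOf p, G.active U i e → G.active U' i e := by
  rintro ⟨u, v⟩ he hact
  have hup : u ∈ p := fst_mem_of_edgesOf he
  rcases hact with ⟨hO, huU⟩ | ⟨hN, huU⟩
  · by_cases huN : u ∈ G.new i
    · -- u is a block start vertex
      have hucom : u ∈ G.commons i := mem_commons_iff.2 ⟨fst_mem_of_edgesOf hO, huN⟩
      have hut : u ≠ G.t := fun h =>
        no_succ_of_last (old_nodup hWF i) (old_getLast hWF i) (h ▸ hO)
      obtain ⟨z', hz'⟩ := exists_succ_edge (commons_getLast hWF i) hucom hut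
      exact Or.inl ⟨hO, fun h => huU ((hSA i u z' hz').2 h)⟩
    · -- u is an interior vertex of the old segment of some block
      obtain ⟨a', z', l₁, m, l₃, hb, hdec, hm, hum⟩ :=
        exists_block_old hWF (fst_mem_of_edgesOf hO) huN
      have ha' : (a', i) ∉ U := (walk_back_old hWF hp hdec hm hum hup).2
      have ha'' : (a', i) ∉ U' := fun h => ha' ((hSA i a' z' hb).2 h)
      have := (hCU' i a' z' hb).2 ha'' u
        ((interior_mem_iff (old_nodup hWF i) hdec).1 hum).1
        ((interior_mem_iff (old_nodup hWF i) hdec).1 hum).2.1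
        ((interior_mem_iff (old_nodup hWF i) hdec).1 hum).2.2
      exact Or.inl ⟨hO, this⟩
  · by_cases huO : u ∈ G.old i
    · have hucom : u ∈ G.commons i := mem_commons_iff.2 ⟨huO, fst_mem_of_edgesOf hN⟩
      have hut : u ≠ G.t := fun h =>
        no_succ_of_last (new_nodup hWF i) (new_getLast hWF i) (h ▸ hN)
      obtain ⟨z', hz'⟩ := exists_succ_edge (commons_getLast hWF i) hucom hut
      exact Or.inr ⟨hN, (hSA i u z' hz').1 huU⟩
    · obtain ⟨a', z', l₁, m, l₃, hb, hdec, hm, hum⟩ :=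
        exists_block_new hWF (fst_mem_of_edgesOf hN) huO
      have ha' : (a', i) ∈ U := (walk_back_new hWF hp hdec hm hum hup).2
      have ha'' : (a', i) ∈ U' := (hSA i a' z' hb).1 ha'
      have := (hCU' i a' z' hb).1 ha'' u
        ((interior_mem_iff (new_nodup hWF i) hdec).1 hum).1
        ((interior_mem_iff (new_nodup hWF i) hdec).1 hum).2.1
        ((interior_mem_iff (new_nodup hWF i) hdec).1 hum).2.2
      exact Or.inr ⟨hN, this⟩

theorem isPathIn_transfer {U U' : Set (V × Fin k)} (hCU' : Consistent G U')
    (hSA : StartAgree G U U') {i : Fin k} {p : List V}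
    (hp : UFN.IsPathIn (G.active U i) G.s G.t p) :
    UFN.IsPathIn (G.active U' i) G.s G.t p := by
  refine ⟨hp.1, hp.2.1, ?_, hp.2.2.2⟩
  rw [chain'_iff_edges]
  intro e he
  exact active_transfer hWF hCU' hSA hp e he ((chain'_iff_edges.1 hp.2.2.1) e he)

theorem transientFamily_transfer {U U' : Set (V × Fin k)} (hCU' : Consistent G U')
    (hSA : StartAgree G U U') (h : G.TransientFamily U) : G.TransientFamily U' := by
  have hCU : Consistent G U := consistent_of_transientFamily hWF h
  obtain ⟨T, hT, hcap⟩ := h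
  refine ⟨T, fun i => ?_, hcap⟩
  obtain ⟨hp, hval, huniq⟩ := hT i
  refine ⟨isPathIn_transfer hWF hCU' hSA hp, hval, ?_⟩
  intro q hq hqval
  exact huniq q (isPathIn_transfer hWF hCU hSA.symm hq) hqval

end WF3

/-! ### Uniqueness of blocks containing a given vertex -/

section WF4

variable {G : UFN V k} (hWF : G.WellFormed)

open UFN

include hWF

theorem start_unique {i : Fin k} {a z z' : V} (h1 : (a, z) ∈ edgesOf (G.commons i))
    (h2 : (a, z') ∈ edgesOf (G.commons i)) : z = z' :=
  succ_unique (commons_nodup hWF i) h1 h2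

theorem newint_unique {i : Fin k} {a z a' z' v : V}
    (h1 : (a, z) ∈ edgesOf (G.commons i)) (h2 : (a', z') ∈ edgesOf (G.commons i))
    (hv1 : v ∈ segment (G.new i) a z ∧ v ≠ a ∧ v ≠ z)
    (hv2 : v ∈ segment (G.new i) a' z' ∧ v ≠ a' ∧ v ≠ z') : a = a' ∧ z = z' := by
  obtain ⟨l₁, m, l₃, hdec, hm, haO, hzO⟩ := block_decomp_new hWF h1
  obtain ⟨l₁', m', l₃', hdec', hm', haO', hzO'⟩ := block_decomp_new hWF h2
  have hvm : v ∈ m := (interior_mem_iff (new_nodup hWF i) hdec).2 hv1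
  have hvm' : v ∈ m' := (interior_mem_iff (new_nodup hWF i) hdec').2 hv2
  obtain ⟨x₁, x₂, rfl⟩ := List.append_of_mem hvm
  obtain ⟨x₁', x₂', rfl⟩ := List.append_of_mem hvm'
  have e1 : G.new i = (l₁ ++ a :: x₁) ++ v :: (x₂ ++ z :: l₃) := by rw [hdec]; simp
  have e2 : G.new i = (l₁' ++ a' :: x₁') ++ v :: (x₂' ++ z' :: l₃') := by rw [hdec']; simp
  have hpre : l₁ ++ a :: x₁ = l₁' ++ a' :: x₁' :=
    (nodup_decomp_unique (e1 ▸ new_nodup hWF i) (e1.symm.trans e2)).1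
  set q : V → Bool := fun w => decide (w ∈ G.old i) with hq
  have hfa : ((l₁ ++ a :: x₁).filter q).getLast? = some a := by
    have hfx : x₁.filter q = [] := List.filter_eq_nil_iff.2 (fun x hx => by
      simpa [hq] using hm x (List.mem_append_left _ hx))
    rw [List.filter_append, List.filter_cons_of_pos (by simpa [hq] using haO), hfx]
    simp [List.getLast?_append]
  have hfa' : ((l₁' ++ a' :: x₁').filter q).getLast? = some a' := by
    have hfx : x₁'.filter q = [] := List.filter_eq_nil_iff.2 (fun x hx => by
      simpa [hq] using hm' x (List.mem_append_left _ hx))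
    rw [List.filter_append, List.filter_cons_of_pos (by simpa [hq] using haO'), hfx]
    simp [List.getLast?_append]
  rw [hpre, hfa'] at hfa
  injection hfa with haa
  subst haa
  exact ⟨rfl, start_unique hWF h1 h2⟩

theorem oldint_unique {i : Fin k} {a z a' z' v : V}
    (h1 : (a, z) ∈ edgesOf (G.commons i)) (h2 : (a', z') ∈ edgesOf (G.commons i))
    (hv1 : v ∈ segment (G.old i) a z ∧ v ≠ a ∧ v ≠ z)
    (hv2 : v ∈ segment (G.old i) a' z' ∧ v ≠ a' ∧ v ≠ z') : a = a' ∧ z = z' := by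
  obtain ⟨l₁, m, l₃, hdec, hm, haN, hzN⟩ := block_decomp_old hWF h1
  obtain ⟨l₁', m', l₃', hdec', hm', haN', hzN'⟩ := block_decomp_old hWF h2
  have hvm : v ∈ m := (interior_mem_iff (old_nodup hWF i) hdec).2 hv1
  have hvm' : v ∈ m' := (interior_mem_iff (old_nodup hWF i) hdec').2 hv2
  obtain ⟨x₁, x₂, rfl⟩ := List.append_of_mem hvm
  obtain ⟨x₁', x₂', rfl⟩ := List.append_of_mem hvm'
  have e1 : G.old i = (l₁ ++ a :: x₁) ++ v :: (x₂ ++ z :: l₃) := by rw [hdec]; simp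
  have e2 : G.old i = (l₁' ++ a' :: x₁') ++ v :: (x₂' ++ z' :: l₃') := by rw [hdec']; simp
  have hpre : l₁ ++ a :: x₁ = l₁' ++ a' :: x₁' :=
    (nodup_decomp_unique (e1 ▸ old_nodup hWF i) (e1.symm.trans e2)).1
  set q : V → Bool := fun w => decide (w ∈ G.new i) with hq
  have hfa : ((l₁ ++ a :: x₁).filter q).getLast? = some a := by
    have hfx : x₁.filter q = [] := List.filter_eq_nil_iff.2 (fun x hx => by
      simpa [hq] using hm x (List.mem_append_left _ hx))
    rw [List.filter_append, List.filter_cons_of_pos (by simpa [hq] using haN), hfx]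
    simp [List.getLast?_append]
  have hfa' : ((l₁' ++ a' :: x₁').filter q).getLast? = some a' := by
    have hfx : x₁'.filter q = [] := List.filter_eq_nil_iff.2 (fun x hx => by
      simpa [hq] using hm' x (List.mem_append_left _ hx))
    rw [List.filter_append, List.filter_cons_of_pos (by simpa [hq] using haN'), hfx]
    simp [List.getLast?_append]
  rw [hpre, hfa'] at hfa
  injection hfa with haa
  subst haa
  exact ⟨rfl, start_unique hWF h1 h2⟩

end WF4

/-! ### The rescheduled update sequence -/

open UFN in
/-- All blocks of the network. -/
def blkList (G : UFN V k) : List (UFN.Blk V k) :=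
  (List.finRange k).flatMap fun i => (edgesOf (G.commons i)).map fun e => (i, e)

open UFN in
theorem mem_blkList {G : UFN V k} {b : UFN.Blk V k} :
    b ∈ blkList G ↔ (b.2.1, b.2.2) ∈ edgesOf (G.commons b.1) := by
  obtain ⟨i, a, z⟩ := b
  constructor
  · intro h
    obtain ⟨i', hi', hbl⟩ := List.mem_flatMap.1 h
    obtain ⟨e, he, heq⟩ := List.mem_map.1 hbl
    have h1 : i' = i := congrArg Prod.fst heq
    have h2 : e = (a, z) := congrArg Prod.snd heq
    subst h1; subst h2
    exact he
  · intro h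
    exact List.mem_flatMap.2 ⟨i, List.mem_finRange i, List.mem_map.2 ⟨(a, z), h, rfl⟩⟩

/-- The blocks sorted by the round in which their start vertex is updated by `R`. -/
def sortedBlks (G : UFN V k) (R : V × Fin k → ℕ) : List (UFN.Blk V k) :=
  (blkList G).mergeSort (fun b b' => decide (R (b.2.1, b.1) ≤ R (b'.2.1, b'.1)))

theorem mem_sortedBlks {G : UFN V k} {R : V × Fin k → ℕ} {b : UFN.Blk V k} :
    b ∈ sortedBlks G R ↔ b ∈ blkList G :=
  (List.mergeSort_perm (blkList G) _).mem_iff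

/-- The rank of a block in the sorted ordering. -/
abbrev blkIdx (G : UFN V k) (R : V × Fin k → ℕ) (b : UFN.Blk V k) : ℕ :=
  @List.idxOf (UFN.Blk V k) instBEqOfDecidableEq b (sortedBlks G R)

theorem sortedBlks_pairwise (G : UFN V k) (R : V × Fin k → ℕ) :
    (sortedBlks G R).Pairwise (fun b b' => R (b.2.1, b.1) ≤ R (b'.2.1, b'.1)) := by
  have := List.pairwise_mergeSort (le := fun b b' : UFN.Blk V k =>
      decide (R (b.2.1, b.1) ≤ R (b'.2.1, b'.1)))
    (fun a b c h1 h2 => by simp only [decide_eq_true_eq] at *; omega)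
    (fun a b => by simp only [Bool.or_eq_true, decide_eq_true_eq]; omega)
    (blkList G)
  exact this.imp (fun h => by simpa using h)

theorem key_mono {G : UFN V k} {R : V × Fin k → ℕ} {b b' : UFN.Blk V k}
    (hb : b ∈ sortedBlks G R) (hb' : b' ∈ sortedBlks G R)
    (h : blkIdx G R b ≤ blkIdx G R b') :
    R (b.2.1, b.1) ≤ R (b'.2.1, b'.1) := by
  set L := sortedBlks G R with hL
  have h1 : blkIdx G R b < L.length := (@List.idxOf_lt_length_iff _ instBEqOfDecidableEq _ _ _).2 hb
  have h2 : blkIdx G R b' < L.length := (@List.idxOf_lt_length_iff _ instBEqOfDecidableEq _ _ _).2 hb'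
  rcases Nat.lt_or_ge (blkIdx G R b) (blkIdx G R b') with hlt | hge
  · have := (List.pairwise_iff_get.1 (sortedBlks_pairwise G R)) ⟨blkIdx G R b, h1⟩
      ⟨blkIdx G R b', h2⟩ hlt
    simpa [List.get_eq_getElem, List.getElem_idxOf] using this
  · have heq : blkIdx G R b = blkIdx G R b' := le_antisymm h hge
    have o1 : L[blkIdx G R b]? = some b := by
      rw [List.getElem?_eq_getElem h1, @List.getElem_idxOf _ instBEqOfDecidableEq _ _ _ h1]
    have o2 : L[blkIdx G R b']? = some b' := by
      rw [List.getElem?_eq_getElem h2, @List.getElem_idxOf _ instBEqOfDecidableEq _ _ _ h2]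
    rw [heq, o2] at o1
    injection o1 with hbb
    rw [hbb]

theorem indexOf_inj {G : UFN V k} {R : V × Fin k → ℕ} {b b' : UFN.Blk V k}
    (hb : b ∈ sortedBlks G R) (hb' : b' ∈ sortedBlks G R)
    (h : blkIdx G R b = blkIdx G R b') : b = b' := by
  set L := sortedBlks G R with hL
  have h1 : blkIdx G R b < L.length := (@List.idxOf_lt_length_iff _ instBEqOfDecidableEq _ _ _).2 hb
  have h2 : blkIdx G R b' < L.length := (@List.idxOf_lt_length_iff _ instBEqOfDecidableEq _ _ _).2 hb'
  have o1 : L[blkIdx G R b]? = some b := by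
    rw [List.getElem?_eq_getElem h1, @List.getElem_idxOf _ instBEqOfDecidableEq _ _ _ h1]
  have o2 : L[blkIdx G R b']? = some b' := by
    rw [List.getElem?_eq_getElem h2, @List.getElem_idxOf _ instBEqOfDecidableEq _ _ _ h2]
  rw [h, o2] at o1
  injection o1 with hbb
  rw [hbb]

open UFN in
/-- The rescheduled update sequence: block number `j` (in the order of the rounds in
which `R` updates the block start vertices) is updated in rounds `3j+1` (interior
update-path vertices), `3j+2` (start vertex) and `3j+3` (old-path-only vertices). -/
def newSched (G : UFN V k) (R : V × Fin k → ℕ) : V × Fin k → ℕ := fun u =>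
  ((sortedBlks G R).find? (fun b => decide (b.1 = u.2 ∧ b.2.1 = u.1))).elim
    (((sortedBlks G R).find? (fun b =>
        decide (b.1 = u.2 ∧ u.1 ∈ G.blkNewSeg b ∧ u.1 ≠ b.2.1 ∧ u.1 ≠ b.2.2))).elim
      (((sortedBlks G R).find? (fun b =>
          decide (b.1 = u.2 ∧ u.1 ∈ G.blkOldSeg b ∧ u.1 ≠ b.2.1 ∧ u.1 ≠ b.2.2))).elim
        0
        (fun b => 3 * blkIdx G R b + 3))
      (fun b => 3 * blkIdx G R b + 1))
    (fun b => 3 * blkIdx G R b + 2)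

section EV

variable {G : UFN V k} (hWF : G.WellFormed) {R : V × Fin k → ℕ}

open UFN

include hWF

theorem blk_eq_of_start {b b' : UFN.Blk V k} (hb : b ∈ blkList G) (hb' : b' ∈ blkList G)
    (h1 : b'.1 = b.1) (h2 : b'.2.1 = b.2.1) : b' = b := by
  obtain ⟨i, a, z⟩ := b
  obtain ⟨i', a', z'⟩ := b'
  simp only at h1 h2
  subst h1; subst h2
  have hzz : z' = z := start_unique hWF (a := a') (z := z') (z' := z)
    (mem_blkList.1 hb') (mem_blkList.1 hb)
  rw [hzz]

theorem newSched_start {b : UFN.Blk V k} (hb : b ∈ sortedBlks G R) :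
    newSched G R (b.2.1, b.1) = 3 * blkIdx G R b + 2 := by
  obtain ⟨bb, hbb⟩ : ∃ bb, (sortedBlks G R).find?
      (fun b' => decide (b'.1 = (b.2.1, b.1).2 ∧ b'.2.1 = (b.2.1, b.1).1)) = some bb :=
    Option.isSome_iff_exists.1 (List.find?_isSome.2 ⟨b, hb, by simp⟩)
  have h1 := List.find?_some hbb
  simp only [decide_eq_true_eq] at h1
  have h2 : bb = b := blk_eq_of_start hWF (mem_sortedBlks.1 hb)
    (mem_sortedBlks.1 (List.mem_of_find?_eq_some hbb)) h1.1 h1.2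
  unfold newSched
  rw [hbb, h2, Option.elim_some]

theorem newSched_newint {b : UFN.Blk V k} (hb : b ∈ sortedBlks G R) {v : V}
    (hv : v ∈ G.blkNewSeg b) (hva : v ≠ b.2.1) (hvz : v ≠ b.2.2) :
    newSched G R (v, b.1) = 3 * blkIdx G R b + 1 := by
  obtain ⟨i, a, z⟩ := b
  simp only at hva hvz hv ⊢
  have hbl : (a, z) ∈ edgesOf (G.commons i) := mem_blkList.1 (mem_sortedBlks.1 hb)
  have hvseg : v ∈ segment (G.new i) a z := hv
  obtain ⟨l₁, m, l₃, hdec, hm, haO, hzO⟩ := block_decomp_new hWF hbl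
  have hvm : v ∈ m := (interior_mem_iff (new_nodup hWF i) hdec).2 ⟨hvseg, hva, hvz⟩
  have hvO : v ∉ G.old i := hm v hvm
  have hnone : (sortedBlks G R).find?
      (fun b' => decide (b'.1 = (v, i).2 ∧ b'.2.1 = (v, i).1)) = none := by
    rw [List.find?_eq_none]
    intro b' hb' hcontra
    simp only [decide_eq_true_eq] at hcontra
    apply hvO
    have hmem := fst_mem_of_edgesOf (mem_blkList.1 (mem_sortedBlks.1 hb'))
    rw [hcontra.1, hcontra.2] at hmem
    exact (mem_commons_iff.1 hmem).1
  obtain ⟨bb, hbb⟩ : ∃ bb, (sortedBlks G R).find? (fun b' =>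
      decide (b'.1 = (v, i).2 ∧ (v, i).1 ∈ G.blkNewSeg b' ∧
        (v, i).1 ≠ b'.2.1 ∧ (v, i).1 ≠ b'.2.2)) = some bb :=
    Option.isSome_iff_exists.1 (List.find?_isSome.2 ⟨(i, a, z), hb, by
      rw [decide_eq_true_eq]
      exact ⟨rfl, hv, hva, hvz⟩⟩)
  have h1 := List.find?_some hbb
  rw [decide_eq_true_eq] at h1
  have hbbmem := mem_blkList.1 (mem_sortedBlks.1 (List.mem_of_find?_eq_some hbb))
  obtain ⟨i2, a2, z2⟩ := bb
  obtain ⟨hi2, hseg2, hva2, hvz2⟩ := h1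
  have hi2' : i = i2 := Eq.symm hi2
  subst hi2'
  have hbbmem' : (a2, z2) ∈ edgesOf (G.commons i) := hbbmem
  have heq := newint_unique hWF hbbmem' hbl ⟨hseg2, hva2, hvz2⟩ ⟨hvseg, hva, hvz⟩
  obtain ⟨rfl, rfl⟩ := heq
  unfold newSched
  rw [hnone, Option.elim_none, hbb, Option.elim_some]

theorem newSched_oldint {b : UFN.Blk V k} (hb : b ∈ sortedBlks G R) {v : V}
    (hv : v ∈ G.blkOldSeg b) (hvN : v ∉ G.new b.1) :
    newSched G R (v, b.1) = 3 * blkIdx G R b + 3 := by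
  obtain ⟨i, a, z⟩ := b
  simp only at hv hvN ⊢
  have hbl : (a, z) ∈ edgesOf (G.commons i) := mem_blkList.1 (mem_sortedBlks.1 hb)
  have hvseg : v ∈ segment (G.old i) a z := hv
  obtain ⟨l₁, m, l₃, hdec, hm, haN, hzN⟩ := block_decomp_old hWF hbl
  have hva : v ≠ a := fun h => hvN (h ▸ haN)
  have hvz : v ≠ z := fun h => hvN (h ▸ hzN)
  have hvm : v ∈ m := (interior_mem_iff (old_nodup hWF i) hdec).2 ⟨hvseg, hva, hvz⟩
  have hnone1 : (sortedBlks G R).find?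
      (fun b' => decide (b'.1 = (v, i).2 ∧ b'.2.1 = (v, i).1)) = none := by
    rw [List.find?_eq_none]
    intro b' hb' hcontra
    simp only [decide_eq_true_eq] at hcontra
    apply hvN
    have hmem := fst_mem_of_edgesOf (mem_blkList.1 (mem_sortedBlks.1 hb'))
    rw [hcontra.1, hcontra.2] at hmem
    exact (mem_commons_iff.1 hmem).2
  have hnone2 : (sortedBlks G R).find? (fun b' =>
      decide (b'.1 = (v, i).2 ∧ (v, i).1 ∈ G.blkNewSeg b' ∧
        (v, i).1 ≠ b'.2.1 ∧ (v, i).1 ≠ b'.2.2)) = none := by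
    rw [List.find?_eq_none]
    intro b' hb' hcontra
    rw [decide_eq_true_eq] at hcontra
    obtain ⟨i', a', z'⟩ := b'
    obtain ⟨hb'1, hb'seg, hb'a, hb'z⟩ := hcontra
    have hb'1' : i' = i := hb'1
    have hbl' : (a', z') ∈ edgesOf (G.commons i) := by
      rw [← hb'1']; exact mem_blkList.1 (mem_sortedBlks.1 hb')
    have hseg' : v ∈ segment (G.new i) a' z' := by
      rw [← hb'1']; exact hb'seg
    have hva' : v ≠ a' := hb'a
    have hvz' : v ≠ z' := hb'z
    obtain ⟨l₁', m', l₃', hdec', hm', _, _⟩ := block_decomp_new hWF hbl'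
    have : v ∈ m' := (interior_mem_iff (new_nodup hWF i) hdec').2 ⟨hseg', hva', hvz'⟩
    exact hvN (by rw [hdec']; simp [this])
  obtain ⟨bb, hbb⟩ : ∃ bb, (sortedBlks G R).find? (fun b' =>
      decide (b'.1 = (v, i).2 ∧ (v, i).1 ∈ G.blkOldSeg b' ∧
        (v, i).1 ≠ b'.2.1 ∧ (v, i).1 ≠ b'.2.2)) = some bb :=
    Option.isSome_iff_exists.1 (List.find?_isSome.2 ⟨(i, a, z), hb, by
      rw [decide_eq_true_eq]
      exact ⟨rfl, hv, hva, hvz⟩⟩)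
  have h1 := List.find?_some hbb
  rw [decide_eq_true_eq] at h1
  have hbbmem := mem_blkList.1 (mem_sortedBlks.1 (List.mem_of_find?_eq_some hbb))
  obtain ⟨i2, a2, z2⟩ := bb
  obtain ⟨hi2, hseg2, hva2, hvz2⟩ := h1
  have hi2' : i = i2 := Eq.symm hi2
  subst hi2'
  have hbbmem' : (a2, z2) ∈ edgesOf (G.commons i) := hbbmem
  have heq := oldint_unique hWF hbbmem' hbl ⟨hseg2, hva2, hvz2⟩ ⟨hvseg, hva, hvz⟩
  obtain ⟨rfl, rfl⟩ := heq
  unfold newSched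
  rw [hnone1, Option.elim_none, hnone2, Option.elim_none, hbb, Option.elim_some]

end EV

end Aux

end FlowUpdate

open FlowUpdate in
/-- If there exists any feasible update sequence, then there exists
a feasible update sequence in which every block is updated in at most 3
consecutive rounds: first all update-path vertices of the block except its
start, then the start vertex, then all remaining (old-path-only) vertices. -/
theorem stmt2 {V : Type} [DecidableEq V] {k : ℕ} (G : UFN V k)
    (hWF : G.WellFormed) (hfeas : ∃ R : V × Fin k → ℕ, G.Feasible R) :
    ∃ R' : V × Fin k → ℕ, G.Feasible R' ∧ G.BlockPattern R' := by
  classical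
  obtain ⟨R, hR⟩ := hfeas
  refine ⟨newSched G R, ?_, ?_⟩
  · -- Feasibility of the rescheduled sequence
    intro r S hS
    set L := sortedBlks G R with hLdef
    set U' : Set (V × Fin k) := {u | newSched G R u < r} ∪ S with hU'
    have hstart : ∀ b ∈ L, ((b.2.1, b.1) ∈ U' ↔
        (3 * blkIdx G R b + 2 < r ∨ (b.2.1, b.1) ∈ S)) := by
      intro b hb
      have h0 : (b.2.1, b.1) ∈ U' ↔
          newSched G R (b.2.1, b.1) < r ∨ (b.2.1, b.1) ∈ S := Iff.rfl
      rw [h0, newSched_start hWF hb]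
    have hgap : ∀ b ∈ L, (b.2.1, b.1) ∈ U' → 3 * blkIdx G R b + 1 < r := by
      intro b hb hbU
      rcases (hstart b hb).1 hbU with h | h
      · omega
      · have h2 := hS _ h
        rw [newSched_start hWF hb] at h2
        omega
    have hCU' : Consistent G U' := by
      intro i a z hbz
      have hbL : ((i, a, z) : UFN.Blk V k) ∈ L := mem_sortedBlks.2 (mem_blkList.2 hbz)
      constructor
      · intro haU v hvseg hva hvz
        have hlt : 3 * blkIdx G R (i, a, z) + 1 < r := hgap _ hbL haU
        have hval : newSched G R (v, i) = 3 * blkIdx G R (i, a, z) + 1 :=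
          newSched_newint hWF hbL (v := v) hvseg hva hvz
        exact Or.inl (show newSched G R (v, i) < r by omega)
      · intro haU v hvseg hva hvz
        obtain ⟨l₁, m, l₃, hdec, hm, _, _⟩ := block_decomp_old hWF hbz
        have hvm : v ∈ m := (interior_mem_iff (old_nodup hWF i) hdec).2 ⟨hvseg, hva, hvz⟩
        have hvN : v ∉ G.new i := hm v hvm
        have hval : newSched G R (v, i) = 3 * blkIdx G R (i, a, z) + 3 :=
          newSched_oldint hWF hbL (v := v) hvseg hvN
        have hge : ¬(3 * blkIdx G R (i, a, z) + 2 < r) := by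
          intro hlt
          exact haU ((hstart _ hbL).2 (Or.inl hlt))
        rintro (hvp | hvS)
        · have h3 : newSched G R (v, i) < r := hvp
          omega
        · have h3 := hS _ hvS
          rw [hval] at h3
          omega
    set P : UFN.Blk V k → Prop := fun b => (b.2.1, b.1) ∈ U' with hP
    by_cases hex : ∃ b ∈ L, P b
    · obtain ⟨bw, hbwL, hbwP⟩ := hex
      set LP := L.filter (fun b => decide (P b)) with hLP
      have hbwLP : bw ∈ LP := List.mem_filter.2 ⟨hbwL, by simp [hbwP]⟩
      obtain ⟨M, hM⟩ : ∃ M : ℕ, (LP.map (fun b => R (b.2.1, b.1))).maximum = (M : WithBot ℕ) := by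
        rcases h : (LP.map (fun b => R (b.2.1, b.1))).maximum with _ | M
        · exact absurd (List.maximum_eq_bot.1 h) (by simp [List.ne_nil_of_mem hbwLP])
        · exact ⟨M, h⟩
      have hMmem := List.maximum_mem hM
      obtain ⟨bstar, hbstarLP, hbstarkey⟩ := List.mem_map.1 hMmem
      have hbound : ∀ b ∈ LP, R (b.2.1, b.1) ≤ M := fun b hb =>
        List.le_maximum_of_mem (List.mem_map_of_mem (f := fun b => R (b.2.1, b.1)) hb) hM
      set SR : Set (V × Fin k) :=
        {u | ∃ b, b ∈ L ∧ P b ∧ R (b.2.1, b.1) = M ∧ u = (b.2.1, b.1)} with hSR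
      have hSRval : ∀ u ∈ SR, R u = M := by
        rintro u ⟨b, _, _, hkey, rfl⟩
        exact hkey
      have hTF : G.TransientFamily ({u | R u < M} ∪ SR) := hR M SR hSRval
      have hdown : ∀ b ∈ L, ∀ b' ∈ L, blkIdx G R b' ≤ blkIdx G R b → P b → P b' := by
        intro b hb b' hb' hle hPb
        rcases Nat.lt_or_ge (blkIdx G R b') (blkIdx G R b) with hlt | hge
        · have hkey : 3 * blkIdx G R b + 2 ≤ r := by
            rcases (hstart b hb).1 hPb with h | h
            · omega
            · have h2 := hS _ h
              rw [newSched_start hWF hb] at h2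
              omega
          exact (hstart b' hb').2 (Or.inl (by omega))
        · have heq : b' = b := indexOf_inj hb' hb (le_antisymm hle hge)
          rw [heq]
          exact hPb
      have hSA : StartAgree G ({u | R u < M} ∪ SR) U' := by
        intro i a z hbz
        have hbL : ((i, a, z) : UFN.Blk V k) ∈ L := mem_sortedBlks.2 (mem_blkList.2 hbz)
        constructor
        · rintro (hpre | hSRmem)
          · by_contra hnP
            have hbstarL : bstar ∈ L := List.mem_of_mem_filter hbstarLP
            have hPbstar : P bstar := by
              have h2 := (List.mem_filter.1 hbstarLP).2
              simpa using h2
            have hidx : ¬(blkIdx G R (i, a, z) ≤ blkIdx G R bstar) := fun h =>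
              hnP (hdown bstar hbstarL _ hbL h hPbstar)
            have hlt : blkIdx G R bstar < blkIdx G R (i, a, z) := by omega
            have h4 := key_mono hbstarL hbL (le_of_lt hlt)
            have h5 : R (bstar.2.1, bstar.1) = M := hbstarkey
            rw [h5] at h4
            have hkey2 : M ≤ R (a, i) := h4
            have hpre' : R (a, i) < M := hpre
            omega
          · obtain ⟨b', hb'L, hPb', hkey', hequ⟩ := hSRmem
            have h1 : b'.1 = i := (congrArg Prod.snd hequ).symm
            have h2 : b'.2.1 = a := (congrArg Prod.fst hequ).symm
            have hbeq : b' = (i, a, z) :=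
              blk_eq_of_start hWF (mem_sortedBlks.1 hbL) (mem_sortedBlks.1 hb'L) h1 h2
            have hres : P (i, a, z) := hbeq ▸ hPb'
            exact hres
        · intro hPb
          have hLPmem : ((i, a, z) : UFN.Blk V k) ∈ LP :=
            List.mem_filter.2 ⟨hbL, by simp [hP]; exact hPb⟩
          have hle : R (a, i) ≤ M := hbound _ hLPmem
          rcases Nat.lt_or_ge (R (a, i)) M with hlt | hge
          · exact Or.inl hlt
          · exact Or.inr ⟨(i, a, z), hbL, hPb, le_antisymm hle hge, rfl⟩
      exact transientFamily_transfer hWF hCU' hSA hTF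
    · push_neg at hex
      have hTF0 : G.TransientFamily (∅ : Set (V × Fin k)) := by
        have h2 := hR 0 ∅ (by intro u hu; simp at hu)
        have h3 : ({u : V × Fin k | R u < 0} ∪ ∅) = (∅ : Set (V × Fin k)) := by
          simp
        rwa [h3] at h2
      have hSA : StartAgree G ∅ U' := by
        intro i a z hbz
        have hbL : ((i, a, z) : UFN.Blk V k) ∈ L := mem_sortedBlks.2 (mem_blkList.2 hbz)
        constructor
        · intro h
          exact absurd h (Set.notMem_empty _)
        · intro h
          exact absurd h (hex _ hbL)
      exact transientFamily_transfer hWF hCU' hSA hTF0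
  · -- Block pattern
    intro b hIsBlk
    have hbl : b ∈ blkList G := mem_blkList.2 hIsBlk
    have hb : b ∈ sortedBlks G R := mem_sortedBlks.2 hbl
    refine ⟨3 * blkIdx G R b + 1, ?_, ?_, ?_⟩
    · intro v hv hva hvz
      exact newSched_newint hWF hb hv hva hvz
    · rw [newSched_start hWF hb]
    · intro v hv hvN
      rw [newSched_oldint hWF hb hv hvN]
end
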